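/- arXiv:2302.06128 — 5 statements merged into one kernel-verified Lean document; each statement's English description precedes it below -/
import Mathlib

section
/- Let η : [t₀, τ₀) → ℝ be differentiable and satisfy the differential inequality η′(t) + a(t)η(t)³ + b(t)η(t)² + c(t)η(t) + d(t) ≥ 0 for all t ∈ [t₀, τ₀), and let y be a solution of the Abel equation (1.1) on [t₀, τ₀) with y(t₀) ≤ η(t₀). Then y(t) ≤ η(t) for all t ∈ [t₀, τ₀). Furthermore, if y(t₀) < η(t₀), then y(t) < η(t) for all t ∈ [t₀, τ₀). -/
open Set MeasureTheory intervalIntegral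

/-- The right-hand side `-(a y³ + b y² + c y + d)` of the Abel equation (1.1). -/
noncomputable def abelRHS (a b c d y : ℝ → ℝ) (t : ℝ) : ℝ :=
  -(a t * y t ^ 3 + b t * y t ^ 2 + c t * y t + d t)

/-- `y` is a solution of the Abel equation `y' + a y³ + b y² + c y + d = 0` on the set `S`. -/
def IsAbelSolOn (a b c d y : ℝ → ℝ) (S : Set ℝ) : Prop :=
  ∀ t ∈ S, HasDerivWithinAt y (abelRHS a b c d y t) S t

/-- The set of real points of the interval `[t₀, τ)`, `τ` an extended real. -/
def eIco (t₀ : ℝ) (τ : EReal) : Set ℝ := {t : ℝ | t₀ ≤ t ∧ (t : EReal) < τ}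

/-- A solution `y` of the Abel equation on `[t₀, t₁) ⊆ [t₀, τ₀)` is noncontinuable if it
cannot be extended to the right as a solution on a larger subinterval of `[t₀, τ₀)`. -/
def Noncontinuable (a b c d : ℝ → ℝ) (t₀ : ℝ) (τ₀ t₁ : EReal) (y : ℝ → ℝ) : Prop :=
  ¬ ∃ (t₂ : EReal) (z : ℝ → ℝ), t₁ < t₂ ∧ t₂ ≤ τ₀ ∧
      IsAbelSolOn a b c d z (eIco t₀ t₂) ∧ EqOn z y (eIco t₀ t₁)

/-- A Grönwall-type one-sided comparison lemma. -/
lemma gron_aux {f f' : ℝ → ℝ} {δ K a b : ℝ}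
    (hf : ContinuousOn f (Icc a b))
    (hf' : ∀ x ∈ Ico a b, HasDerivWithinAt f (f' x) (Ici x) x)
    (hfa : f a ≤ δ) (bound : ∀ x ∈ Ico a b, f' x ≤ K * f x) :
    ∀ x ∈ Icc a b, f x ≤ δ * Real.exp (K * (x - a)) := by
  intro x hx
  have h := le_gronwallBound_of_liminf_deriv_right_le (ε := 0) hf
    (fun x hx _ hr => (hf' x hx).liminf_right_slope_le hr) hfa
    (fun x hx => by simpa using bound x hx) x hx
  simpa [gronwallBound_ε0] using h

/-- Lemma 2.2: comparison of a solution of the Abel equation with a supersolution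
of the differential inequality (2.4) on `[t₀, τ₀)`. -/
theorem stmt_0 (t₀ : ℝ) (τ₀ : EReal) (hτ : (t₀ : EReal) < τ₀)
    (a b c d η y : ℝ → ℝ)
    (ha : ContinuousOn a (eIco t₀ τ₀)) (hb : ContinuousOn b (eIco t₀ τ₀))
    (hc : ContinuousOn c (eIco t₀ τ₀)) (hd : ContinuousOn d (eIco t₀ τ₀))
    (hη : ∀ t ∈ eIco t₀ τ₀, ∃ v : ℝ, HasDerivWithinAt η v (eIco t₀ τ₀) t ∧
      0 ≤ v + a t * η t ^ 3 + b t * η t ^ 2 + c t * η t + d t)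
    (hy : IsAbelSolOn a b c d y (eIco t₀ τ₀))
    (h0 : y t₀ ≤ η t₀) :
    (∀ t ∈ eIco t₀ τ₀, y t ≤ η t) ∧
      (y t₀ < η t₀ → ∀ t ∈ eIco t₀ τ₀, y t < η t) := by
  set S := eIco t₀ τ₀ with hS
  -- extract the derivative of η
  choose! v hv hvI using hη
  -- the difference function and its derivative
  set w : ℝ → ℝ := fun t => η t - y t with hwdef
  set w' : ℝ → ℝ := fun t =>
    v t + (a t * y t ^ 3 + b t * y t ^ 2 + c t * y t + d t) with hw'def
  have hw : ∀ t ∈ S, HasDerivWithinAt w (w' t) S t := by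
    intro t ht
    have h1 := (hv t ht).sub (hy t ht)
    have heq : w' t = v t - abelRHS a b c d y t := by
      simp only [abelRHS, hw'def]; ring
    rw [heq]; exact h1
  -- the "Lipschitz factor"
  set g : ℝ → ℝ := fun t =>
    a t * (η t ^ 2 + η t * y t + y t ^ 2) + (b t * (η t + y t) + c t) with hgdef
  -- basic continuity facts
  have hyc : ContinuousOn y S := fun t ht => (hy t ht).continuousWithinAt
  have hηc : ContinuousOn η S := fun t ht => (hv t ht).continuousWithinAt
  have hwc : ContinuousOn w S := hηc.sub hyc
  have hgc : ContinuousOn g S :=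
    (ha.mul (((hηc.pow 2).add (hηc.mul hyc)).add (hyc.pow 2))).add
      ((hb.mul (hηc.add hyc)).add hc)
  -- the key differential inequality
  have hkey : ∀ t ∈ S, -(g t * w t) ≤ w' t := by
    intro t ht
    have h1 := hvI t ht
    have h2 : w' t + g t * w t
        = v t + a t * η t ^ 3 + b t * η t ^ 2 + c t * η t + d t := by
      simp only [hw'def, hgdef, hwdef]; ring
    linarith
  have hIccS : ∀ t₁ ∈ S, Icc t₀ t₁ ⊆ S := by
    intro t₁ ht₁ t ht
    exact ⟨ht.1, lt_of_le_of_lt (EReal.coe_le_coe_iff.2 ht.2) ht₁.2⟩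
  -- weak comparison
  have hweak : ∀ t ∈ S, y t ≤ η t := by
    intro t₁ ht₁
    by_contra hlt
    push_neg at hlt
    have hwt₁ : w t₁ < 0 := by simp [hwdef]; linarith
    have hsub := hIccS t₁ ht₁
    have ht01 : t₀ ≤ t₁ := ht₁.1
    obtain ⟨K₀, hK₀⟩ := isCompact_Icc.exists_bound_of_continuousOn (hgc.mono hsub)
    -- the last point where w ≥ 0
    set A : Set ℝ := Icc t₀ t₁ ∩ w ⁻¹' Ici 0 with hAdef
    have hA0 : t₀ ∈ A := by
      refine ⟨⟨le_refl _, ht01⟩, ?_⟩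
      simp [hwdef]; linarith
    have hAclosed : IsClosed A :=
      (hwc.mono hsub).preimage_isClosed_of_isClosed isClosed_Icc isClosed_Ici
    have hAcomp : IsCompact A :=
      isCompact_Icc.of_isClosed_subset hAclosed inter_subset_left
    set s := sSup A with hsdef
    have hsA : s ∈ A := hAcomp.sSup_mem ⟨t₀, hA0⟩
    have hws0 : 0 ≤ w s := hsA.2
    have hst₁ : s < t₁ := by
      rcases lt_or_eq_of_le hsA.1.2 with h | h
      · exact h
      · exfalso; rw [h] at hws0; linarith
    have hneg : ∀ t ∈ Ioc s t₁, w t < 0 := by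
      intro t ht
      by_contra hge
      push_neg at hge
      have : t ∈ A := ⟨⟨le_trans hsA.1.1 ht.1.le, ht.2⟩, hge⟩
      exact absurd (le_csSup hAcomp.bddAbove this) (not_le.2 ht.1)
    have hwsle : w s ≤ 0 := by
      have hcw : ContinuousWithinAt w (Ioc s t₁) s := by
        refine ((hwc.mono hsub).continuousWithinAt ⟨hsA.1.1, hsA.1.2⟩).mono ?_
        exact fun t ht => ⟨le_trans hsA.1.1 ht.1.le, ht.2⟩
      rw [ContinuousWithinAt] at hcw
      rw [nhdsWithin_Ioc_eq_nhdsGT hst₁] at hcw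
      refine le_of_tendsto hcw ?_
      rw [← nhdsWithin_Ioc_eq_nhdsGT hst₁]
      exact eventually_nhdsWithin_of_forall fun t ht => (hneg t ht).le
    have hws : w s = 0 := le_antisymm hwsle hws0
    -- apply Grönwall on [s, t₁] to f = -w
    have hsS : ∀ x ∈ Icc s t₁, x ∈ S := fun x hx => hsub ⟨le_trans hsA.1.1 hx.1, hx.2⟩
    have hwle : ∀ x ∈ Ico s t₁, w x ≤ 0 := by
      intro x hx
      rcases eq_or_lt_of_le hx.1 with h | h
      · rw [← h, hws]
      · exact (hneg x ⟨h, hx.2.le⟩).le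
    have hf' : ∀ x ∈ Ico s t₁, HasDerivWithinAt (fun t => -w t) (-(w' x)) (Ici x) x := by
      intro x hx
      have hxS := hsS x ⟨hx.1, hx.2.le⟩
      have h1 := ((hw x hxS).neg).mono (fun t ht => hsS t ht)
      exact h1.mono_of_mem_nhdsWithin (Icc_mem_nhdsGE_of_mem hx)
    have hbound : ∀ x ∈ Ico s t₁, -(w' x) ≤ K₀ * (-w x) := by
      intro x hx
      have hxS := hsS x ⟨hx.1, hx.2.le⟩
      have h1 := hkey x hxS
      have h2 : |g x| ≤ K₀ := by
        have := hK₀ x ⟨le_trans hsA.1.1 hx.1, hx.2.le⟩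
        simpa using this
      have h3 := abs_le.1 h2
      have h4 := hwle x hx
      nlinarith [h3.1, h3.2]
    have hfinal := gron_aux (δ := 0) (K := K₀)
      ((hwc.mono hsub).neg.mono (fun x hx => ⟨le_trans hsA.1.1 hx.1, hx.2⟩))
      hf' (by simp [hws]) hbound t₁ ⟨hst₁.le, le_refl _⟩
    simp only [zero_mul, Pi.neg_apply] at hfinal
    have : 0 < -w t₁ := by linarith
    linarith
  refine ⟨hweak, ?_⟩
  -- strict comparison
  intro hstrict t₁ ht₁
  have hsub := hIccS t₁ ht₁
  have ht01 : t₀ ≤ t₁ := ht₁.1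
  obtain ⟨K₀, hK₀⟩ := isCompact_Icc.exists_bound_of_continuousOn (hgc.mono hsub)
  have hf' : ∀ x ∈ Ico t₀ t₁, HasDerivWithinAt (fun t => -w t) (-(w' x)) (Ici x) x := by
    intro x hx
    have hxS := hsub ⟨hx.1, hx.2.le⟩
    have h1 := ((hw x hxS).neg).mono hsub
    exact h1.mono_of_mem_nhdsWithin (Icc_mem_nhdsGE_of_mem hx)
  have hbound : ∀ x ∈ Ico t₀ t₁, -(w' x) ≤ (-K₀) * (-w x) := by
    intro x hx
    have hxS := hsub ⟨hx.1, hx.2.le⟩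
    have h1 := hkey x hxS
    have h2 : |g x| ≤ K₀ := by simpa using hK₀ x ⟨hx.1, hx.2.le⟩
    have h3 := abs_le.1 h2
    have h4 : 0 ≤ w x := by
      have := hweak x hxS
      simp [hwdef]; linarith
    nlinarith [h3.1, h3.2]
  have hδ : -w t₀ < 0 := by simp [hwdef]; linarith
  have hfinal := gron_aux (δ := -w t₀) (K := -K₀)
    ((hwc.mono hsub).neg) hf' (le_refl _) hbound t₁ ⟨ht01, le_refl _⟩
  have hexp : (0:ℝ) < Real.exp (-K₀ * (t₁ - t₀)) := Real.exp_pos _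
  have : -w t₁ < 0 := lt_of_le_of_lt hfinal (by nlinarith)
  simp only [hwdef] at this
  linarith
end

section
/- Let η : [t₀, τ₀) → ℝ be differentiable and satisfy the differential inequality η′(t) + a(t)η(t)³ + b(t)η(t)² + c(t)η(t) + d(t) ≤ 0 for all t ∈ [t₀, τ₀), and let y be a solution of the Abel equation (1.1) on [t₀, τ₀) with y(t₀) ≥ η(t₀). Then y(t) ≥ η(t) for all t ∈ [t₀, τ₀). Furthermore, if y(t₀) > η(t₀), then y(t) > η(t) for all t ∈ [t₀, τ₀). -/
open Set MeasureTheory intervalIntegral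

/-- Lemma 2.3: comparison of a solution of the Abel equation with a subsolution
of the differential inequality (2.8) on `[t₀, τ₀)`. -/
theorem stmt_1 (t₀ : ℝ) (τ₀ : EReal) (hτ : (t₀ : EReal) < τ₀)
    (a b c d η y : ℝ → ℝ)
    (ha : ContinuousOn a (eIco t₀ τ₀)) (hb : ContinuousOn b (eIco t₀ τ₀))
    (hc : ContinuousOn c (eIco t₀ τ₀)) (hd : ContinuousOn d (eIco t₀ τ₀))
    (hη : ∀ t ∈ eIco t₀ τ₀, ∃ v : ℝ, HasDerivWithinAt η v (eIco t₀ τ₀) t ∧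
      v + a t * η t ^ 3 + b t * η t ^ 2 + c t * η t + d t ≤ 0)
    (hy : IsAbelSolOn a b c d y (eIco t₀ τ₀))
    (h0 : η t₀ ≤ y t₀) :
    (∀ t ∈ eIco t₀ τ₀, η t ≤ y t) ∧
      (η t₀ < y t₀ → ∀ t ∈ eIco t₀ τ₀, η t < y t) := by
  set S := eIco t₀ τ₀ with hS
  -- basic facts
  have hyc : ContinuousOn y S := fun t ht => (hy t ht).continuousWithinAt
  have hηc : ContinuousOn η S := fun t ht => (hη t ht).choose_spec.1.continuousWithinAt
  set g : ℝ → ℝ := fun t => a t * (y t ^ 2 + y t * η t + η t ^ 2) + b t * (y t + η t) + c t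
    with hg
  have hgc : ContinuousOn g S := by
    apply ContinuousOn.add
    apply ContinuousOn.add
    · exact ha.mul (((hyc.pow 2).add (hyc.mul hηc)).add (hηc.pow 2))
    · exact hb.mul (hyc.add hηc)
    · exact hc
  set G : ℝ → ℝ := fun x => ∫ s in t₀..x, g s with hGdef
  -- key step: ∀ T ∈ S, y t₀ - η t₀ ≤ (y T - η T) * exp (G T)
  have key : ∀ T ∈ S, y t₀ - η t₀ ≤ (y T - η T) * Real.exp (G T) := by
    intro T hT
    have hT0 : t₀ ≤ T := hT.1
    have hsub : Icc t₀ T ⊆ S := by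
      intro x hx
      exact ⟨hx.1, lt_of_le_of_lt (EReal.coe_le_coe_iff.2 hx.2) hT.2⟩
    -- continuity of G on Icc t₀ T
    have hgint : IntegrableOn g (uIcc t₀ T) := by
      rw [uIcc_of_le hT0]
      exact (hgc.mono hsub).integrableOn_compact isCompact_Icc
    have hGc : ContinuousOn G (Icc t₀ T) := by
      have := intervalIntegral.continuousOn_primitive_interval (μ := volume) hgint
      rwa [uIcc_of_le hT0] at this
    set u : ℝ → ℝ := fun x => (y x - η x) * Real.exp (G x) with hu
    have huc : ContinuousOn u (Icc t₀ T) :=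
      (((hyc.sub hηc).mono hsub).mul (hGc.rexp))
    have hmono : MonotoneOn u (Icc t₀ T) := by
      apply monotoneOn_of_deriv_nonneg (convex_Icc t₀ T) huc
      all_goals rw [interior_Icc]
      all_goals
        have hder : ∀ x ∈ Ioo t₀ T, ∃ u', HasDerivAt u u' x ∧ 0 ≤ u' := by
          intro x hx
          have hxS : x ∈ S := hsub (Ioo_subset_Icc_self hx)
          have hnhds : S ∈ nhds x :=
            mem_nhds_iff.2 ⟨Ioo t₀ T, Ioo_subset_Icc_self.trans hsub, isOpen_Ioo, hx⟩
          have hy' : HasDerivAt y (abelRHS a b c d y x) x := (hy x hxS).hasDerivAt hnhds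
          obtain ⟨v, hηd, hineq⟩ := hη x hxS
          have hη' : HasDerivAt η v x := hηd.hasDerivAt hnhds
          have hfint : IntervalIntegrable g volume t₀ x := by
            apply ContinuousOn.intervalIntegrable
            apply hgc.mono
            rw [uIcc_of_le hx.1.le]
            exact (Icc_subset_Icc le_rfl hx.2.le).trans hsub
          have hG' : HasDerivAt G (g x) x := by
            refine intervalIntegral.integral_hasDerivAt_right hfint ?_ (hgc.continuousAt hnhds)
            exact (hgc.mono (Ioo_subset_Icc_self.trans hsub)).stronglyMeasurableAtFilter
              isOpen_Ioo x hx
          have hu' : HasDerivAt u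
              ((abelRHS a b c d y x - v) * Real.exp (G x)
                + (y x - η x) * (Real.exp (G x) * g x)) x := (hy'.sub hη').mul hG'.exp
          refine ⟨_, hu', ?_⟩
          have h2 : 0 ≤ (abelRHS a b c d y x - v) + (y x - η x) * g x := by
            simp only [abelRHS, hg]
            nlinarith [hineq]
          have hE := (Real.exp_pos (G x)).le
          nlinarith [mul_nonneg h2 hE]
      · intro x hx
        exact (hder x hx).choose_spec.1.differentiableAt.differentiableWithinAt
      · intro x hx
        obtain ⟨u', h1, h2⟩ := hder x hx
        rw [h1.deriv]; exact h2
    have h1 := hmono (left_mem_Icc.2 hT0) (right_mem_Icc.2 hT0) hT0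
    have hG0 : G t₀ = 0 := intervalIntegral.integral_same
    simpa [hu, hG0] using h1
  have hGpos : ∀ T, 0 < Real.exp (G T) := fun T => Real.exp_pos _
  constructor
  · intro t ht
    have := key t ht
    nlinarith [hGpos t]
  · intro hlt t ht
    have := key t ht
    nlinarith [hGpos t]
end

section
/- Assume that a(t) > 0 for Lebesgue-almost every t ∈ [t₀, τ₀) and that the function t ↦ b(t)²/a(t) is locally integrable on [t₀, τ₀). Then every noncontinuable solution y of the Abel equation (1.1) on an interval [t₀, t₁) ⊆ [t₀, τ₀) satisfies t₁ = τ₀; in particular, for every γ ∈ ℝ there exists a solution y of (1.1) on all of [t₀, τ₀) with y(t₀) = γ. -/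
open Set MeasureTheory intervalIntegral

section AbelAux
open Filter
open scoped NNReal Topology

lemma eIco_coe (t₀ m : ℝ) : eIco t₀ (m : EReal) = Ico t₀ m := by
  ext t; simp [eIco, EReal.coe_lt_coe_iff, Ico]

lemma abel_alg (A B C D Y : ℝ) (hA : 0 < A) :
    2*Y*(-(A*Y^3 + B*Y^2 + C*Y + D)) ≤ (B^2/A + (2*|C| + |D|))*(Y^2+1) := by
  have hE : (B^2/A) * A = B^2 := div_mul_cancel₀ _ hA.ne'
  have hEnn : 0 ≤ B^2/A := div_nonneg (sq_nonneg B) hA.le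
  have h1 : 0 ≤ (A*Y^2 - |B| * |Y|)^2 := sq_nonneg _
  have hBY : -(|B| * |Y| * Y^2) ≤ B*Y^3 := by
    have h := neg_abs_le (B*Y^3)
    have habs : |B*Y^3| = |B| * |Y| * Y^2 := by
      rw [abs_mul, abs_pow]
      have h3 : |Y|^3 = |Y| * Y^2 := by
        rw [pow_succ']
        congr 1
        exact sq_abs Y
      rw [h3]; ring
    linarith [habs.le, habs.ge]
  have hCY : -(C*Y^2) ≤ |C| * Y^2 := by
    have := neg_abs_le C
    nlinarith [sq_nonneg Y, abs_nonneg C]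
  have hDY : -(2*(D*Y)) ≤ |D| * (Y^2+1) := by
    have h2 : 2 * |D| * |Y| ≤ |D| * (Y^2 + 1) := by
      nlinarith [sq_nonneg (|Y| - 1), abs_nonneg D, sq_abs Y]
    have h3 : -(2*(D*Y)) ≤ 2 * |D| * |Y| := by
      have h4 := abs_mul D Y
      have h5 := neg_abs_le (D*Y)
      nlinarith [abs_nonneg (D*Y)]
    linarith
  have hkey : 0 ≤ A*Y^4 - 2*(|B| * |Y|)*Y^2 + (B^2/A)*Y^2 := by
    have h4 : 0 ≤ (A*Y^2 - |B| * |Y|)^2 / A := div_nonneg h1 hA.le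
    have h5 : (A*Y^2 - |B| * |Y|)^2 / A = A*Y^4 - 2*(|B| * |Y|)*Y^2 + (B^2/A)*Y^2 := by
      field_simp
      linear_combination |Y|^2 * sq_abs B + B^2 * sq_abs Y
    linarith [h5 ▸ h4]
  have hA4 : 0 ≤ A * Y^4 := by positivity
  nlinarith [hBY, hCY, hDY, hkey, hEnn, abs_nonneg C, abs_nonneg D, sq_nonneg Y, hA4,
    mul_nonneg hEnn (sq_nonneg Y), mul_nonneg (abs_nonneg C) (sq_nonneg Y),
    mul_nonneg (abs_nonneg D) (sq_nonneg Y)]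

lemma abel_local_exists (t₀ : ℝ) (τ₀ : EReal) (a b c d : ℝ → ℝ)
    (ha : ContinuousOn a (eIco t₀ τ₀)) (hb : ContinuousOn b (eIco t₀ τ₀))
    (hc : ContinuousOn c (eIco t₀ τ₀)) (hd : ContinuousOn d (eIco t₀ τ₀))
    (s₀ : ℝ) (hs₀ : t₀ ≤ s₀) (hs₀τ : (s₀ : EReal) < τ₀) (γ : ℝ) :
    ∃ m : ℝ, s₀ < m ∧ (m : EReal) < τ₀ ∧ ∃ w : ℝ → ℝ, w s₀ = γ ∧
      ∀ t ∈ Icc s₀ m, HasDerivWithinAt w (abelRHS a b c d w t) (Icc s₀ m) t := by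
  obtain ⟨m₁, h1, h2⟩ := EReal.exists_between_coe_real hs₀τ
  have hs₀m₁ : s₀ < m₁ := EReal.coe_lt_coe_iff.mp h1
  have hJsub : Icc s₀ m₁ ⊆ eIco t₀ τ₀ := fun t ht =>
    ⟨hs₀.trans ht.1, lt_of_le_of_lt (EReal.coe_le_coe_iff.mpr ht.2) h2⟩
  -- bound on coefficients
  obtain ⟨Ka, hKa⟩ := isCompact_Icc.exists_bound_of_continuousOn (ha.mono hJsub)
  obtain ⟨Kb, hKb⟩ := isCompact_Icc.exists_bound_of_continuousOn (hb.mono hJsub)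
  obtain ⟨Kc, hKc⟩ := isCompact_Icc.exists_bound_of_continuousOn (hc.mono hJsub)
  obtain ⟨Kd, hKd⟩ := isCompact_Icc.exists_bound_of_continuousOn (hd.mono hJsub)
  set K : ℝ := max (max (max Ka Kb) (max Kc Kd)) 0 with hK
  have hK0 : 0 ≤ K := le_max_right _ _
  have hKa' : ∀ t ∈ Icc s₀ m₁, |a t| ≤ K := fun t ht =>
    (hKa t ht).trans (le_max_of_le_left (le_max_of_le_left (le_max_left _ _)))
  have hKb' : ∀ t ∈ Icc s₀ m₁, |b t| ≤ K := fun t ht =>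
    (hKb t ht).trans (le_max_of_le_left (le_max_of_le_left (le_max_right _ _)))
  have hKc' : ∀ t ∈ Icc s₀ m₁, |c t| ≤ K := fun t ht =>
    (hKc t ht).trans (le_max_of_le_left (le_max_of_le_right (le_max_left _ _)))
  have hKd' : ∀ t ∈ Icc s₀ m₁, |d t| ≤ K := fun t ht =>
    (hKd t ht).trans (le_max_of_le_left (le_max_of_le_right (le_max_right _ _)))
  set ρ : ℝ := |γ| + 1 with hρ
  have hρ0 : 0 ≤ ρ := by positivity
  set C : ℝ := K * (ρ^3 + ρ^2 + ρ + 1) with hCdef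
  have hC0 : 0 ≤ C := by positivity
  set L₀ : ℝ := K * (3*ρ^2 + 2*ρ + 1) with hL₀def
  have hL₀ : 0 ≤ L₀ := by positivity
  set ε : ℝ := min (m₁ - s₀) (1/(C+1)) with hεdef
  have hε : 0 < ε := lt_min (by linarith) (by positivity)
  set m : ℝ := s₀ + ε with hmdef
  have hsm : s₀ < m := by simp [hmdef]; linarith
  have hmm₁ : m ≤ m₁ := by
    have := min_le_left (m₁ - s₀) (1/(C+1)); simp [hmdef]; linarith [this]
  have hmτ : (m : EReal) < τ₀ := lt_of_le_of_lt (EReal.coe_le_coe_iff.mpr hmm₁) h2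
  have hIccsub : Icc s₀ m ⊆ Icc s₀ m₁ := Icc_subset_Icc le_rfl hmm₁
  -- membership of ball gives |x| ≤ ρ
  have hball : ∀ x ∈ Metric.closedBall γ 1, |x| ≤ ρ := by
    intro x hx
    rw [Metric.mem_closedBall, Real.dist_eq] at hx
    calc |x| = |x - γ + γ| := by ring_nf
    _ ≤ |x - γ| + |γ| := abs_add_le _ _
    _ ≤ 1 + |γ| := by linarith
    _ = ρ := by rw [hρ]; ring
  have hpl : IsPicardLindelof (fun t x => -(a t * x^3 + b t * x^2 + c t * x + d t))
      (tmin := s₀) (tmax := m) ⟨s₀, left_mem_Icc.mpr hsm.le⟩ γ 1 0 (Real.toNNReal C)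
      (Real.toNNReal L₀) := by
    constructor
    · -- Lipschitz
      intro t ht
      rw [NNReal.coe_one]
      have htJ : t ∈ Icc s₀ m₁ := hIccsub ht
      have hder : ∀ x ∈ Metric.closedBall γ 1,
          HasDerivWithinAt (fun x => -(a t * x^3 + b t * x^2 + c t * x + d t))
            ((fun x => -(a t * (3*x^2) + b t * (2*x) + c t)) x) (Metric.closedBall γ 1) x := by
        intro x _
        have h3 : HasDerivAt (fun x : ℝ => x^3) (3*x^2) x := by
          simpa using hasDerivAt_pow 3 x
        have h2' : HasDerivAt (fun x : ℝ => x^2) (2*x) x := by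
          simpa using hasDerivAt_pow 2 x
        have hda : HasDerivAt (fun x => -(a t * x^3 + b t * x^2 + c t * x + d t))
            (-(a t * (3*x^2) + b t * (2*x) + c t)) x := by
          have := ((((h3.const_mul (a t)).add (h2'.const_mul (b t))).add
            ((hasDerivAt_id x).const_mul (c t))).add_const (d t)).neg
          exact this.congr_deriv (by ring)
        exact hda.hasDerivWithinAt
      refine (convex_closedBall γ 1).lipschitzOnWith_of_nnnorm_hasDerivWithin_le hder ?_
      · intro x hx
        have hxρ := hball x hx
        rw [← NNReal.coe_le_coe]
        have hcoe : ((Real.toNNReal L₀ : ℝ≥0) : ℝ) = max L₀ 0 := Real.coe_toNNReal' L₀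
        rw [hcoe]
        refine le_trans ?_ (le_max_left _ _)
        rw [coe_nnnorm]
        have : ‖-(a t * (3*x^2) + b t * (2*x) + c t)‖ = |a t * (3*x^2) + b t * (2*x) + c t| := by
          rw [norm_neg]; rfl
        rw [this]
        have hx2 : x^2 ≤ ρ^2 := by nlinarith [abs_nonneg x, sq_abs x]
        calc |a t * (3*x^2) + b t * (2*x) + c t|
            ≤ |a t * (3*x^2)| + |b t * (2*x)| + |c t| := abs_add_three _ _ _
        _ = |a t| * (3*x^2) + |b t| * (2*|x|) + |c t| := by
            have e1 : |a t * (3*x^2)| = |a t| * (3 * x^2) := by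
              rw [abs_mul]; congr 1; exact abs_of_nonneg (by positivity)
            have e2 : |b t * (2*x)| = |b t| * (2 * |x|) := by
              rw [abs_mul]; congr 1; rw [abs_mul]; norm_num
            rw [e1, e2]
        _ ≤ K * (3*ρ^2) + K * (2*ρ) + K := by
            have h1 := hKa' t htJ; have h2 := hKb' t htJ; have h3 := hKc' t htJ
            have hxx : 0 ≤ x^2 := sq_nonneg x
            have := abs_nonneg (a t); have := abs_nonneg (b t); have := abs_nonneg x
            gcongr <;> nlinarith
        _ = L₀ := by rw [hL₀def]; ring
    · -- continuity in t
      intro x _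
      show ContinuousOn _ (Icc s₀ m)
      have hsub2 : Icc s₀ m ⊆ eIco t₀ τ₀ := fun t ht => hJsub (hIccsub ht)
      exact ((((ha.mono hsub2).mul continuousOn_const).add
        (((hb.mono hsub2).mul continuousOn_const))).add
        (((hc.mono hsub2).mul continuousOn_const))).add (hd.mono hsub2) |>.neg
    · -- norm bound
      intro t ht x hx
      rw [NNReal.coe_one] at hx
      rw [Real.coe_toNNReal _ hC0]
      have htJ : t ∈ Icc s₀ m₁ := hIccsub ht
      have hxρ := hball x hx
      have : ‖-(a t * x^3 + b t * x^2 + c t * x + d t)‖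
          = |a t * x^3 + b t * x^2 + c t * x + d t| := by rw [norm_neg]; rfl
      rw [this]
      have h1 := hKa' t htJ; have h2 := hKb' t htJ; have h3 := hKc' t htJ; have h4 := hKd' t htJ
      have hx3 : |x|^3 ≤ ρ^3 := by
        apply pow_le_pow_left₀ (abs_nonneg x) hxρ
      have hx2 : |x|^2 ≤ ρ^2 := by
        apply pow_le_pow_left₀ (abs_nonneg x) hxρ
      calc |a t * x^3 + b t * x^2 + c t * x + d t|
          ≤ |a t * x^3| + |b t * x^2| + |c t * x| + |d t| := by
            calc |a t * x^3 + b t * x^2 + c t * x + d t|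
                ≤ |a t * x^3 + b t * x^2| + |c t * x| + |d t| := abs_add_three _ _ _
            _ ≤ |a t * x^3| + |b t * x^2| + |c t * x| + |d t| := by
                have := abs_add_le (a t * x^3) (b t * x^2); linarith
      _ = |a t| * |x|^3 + |b t| * |x|^2 + |c t| * |x| + |d t| := by
            rw [abs_mul, abs_mul, abs_mul, abs_pow, abs_pow]
      _ ≤ K * ρ^3 + K * ρ^2 + K * ρ + K := by
            gcongr <;> first
              | assumption
              | positivity
              | nlinarith [abs_nonneg (a t), abs_nonneg (b t), abs_nonneg (c t), abs_nonneg x]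
      _ = C := by rw [hCdef]; ring
    · -- C mul le R
      have hmax : max (m - s₀) (s₀ - s₀) = ε := by
        simp [hmdef]
        linarith [hε]
      simp only [NNReal.coe_one, NNReal.coe_zero, sub_zero, Real.coe_toNNReal _ hC0]
      rw [hmax]
      have hε2 : ε ≤ 1/(C+1) := min_le_right _ _
      have : C * ε ≤ C * (1/(C+1)) := by
        apply mul_le_mul_of_nonneg_left hε2 hC0
      have h5 : C * (1/(C+1)) ≤ 1 := by
        rw [mul_one_div, div_le_one (by linarith)]
        linarith
      linarith
  obtain ⟨w, hw0, hw⟩ := hpl.exists_eq_forall_mem_Icc_hasDerivWithinAt₀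
  exact ⟨m, hsm, hmτ, w, hw0, fun t ht => hw t ht⟩

lemma abel_bound (t₀ : ℝ) (τ₀ : EReal)
    (a b c d : ℝ → ℝ)
    (ha : ContinuousOn a (eIco t₀ τ₀)) (hb : ContinuousOn b (eIco t₀ τ₀))
    (hc : ContinuousOn c (eIco t₀ τ₀)) (hd : ContinuousOn d (eIco t₀ τ₀))
    (hapos : ∀ᵐ t ∂(volume.restrict (eIco t₀ τ₀)), 0 < a t)
    (hint : ∀ t : ℝ, t₀ < t → (t : EReal) < τ₀ →
      IntegrableOn (fun s => b s ^ 2 / a s) (Icc t₀ t))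
    (t₁ : ℝ) (ht₀₁ : t₀ < t₁) (ht₁τ : (t₁ : EReal) < τ₀)
    (y : ℝ → ℝ)
    (hy : ∀ t ∈ Ico t₀ t₁, HasDerivWithinAt y (abelRHS a b c d y t) (Ico t₀ t₁) t) :
    ∃ R : ℝ, ∀ t ∈ Ico t₀ t₁, |y t| ≤ R := by
  obtain ⟨ts, hts1, hts2⟩ := EReal.exists_between_coe_real ht₁τ
  have ht₁s : t₁ < ts := EReal.coe_lt_coe_iff.mp hts1
  have hsubJ : Icc t₀ ts ⊆ eIco t₀ τ₀ := fun z hz =>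
    ⟨hz.1, lt_of_le_of_lt (EReal.coe_le_coe_iff.mpr hz.2) hts2⟩
  have hIcoSub : Ico t₀ t₁ ⊆ eIco t₀ τ₀ := fun z hz =>
    ⟨hz.1, lt_trans (EReal.coe_lt_coe_iff.mpr hz.2) ht₁τ⟩
  set G : ℝ → ℝ := fun s => b s^2 / a s + (2*|c s| + |d s|) with hGdef
  have hGint : IntegrableOn G (Icc t₀ ts) := by
    apply (hint ts (ht₀₁.trans ht₁s) hts2).add
    apply ContinuousOn.integrableOn_Icc
    exact ((continuousOn_const.mul (hc.mono hsubJ).abs).add (hd.mono hsubJ).abs)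
  have hGabs : IntegrableOn (fun s => |G s|) (Icc t₀ ts) := hGint.abs
  have hycont : ContinuousOn y (Ico t₀ t₁) := fun t ht => (hy t ht).continuousWithinAt
  set u : ℝ → ℝ := fun t => Real.log (y t^2 + 1) with hudef
  set u' : ℝ → ℝ := fun t => (2 * y t * abelRHS a b c d y t) / (y t^2 + 1) with hu'def
  set B : ℝ := Real.log (y t₀^2 + 1) + ∫ s in Icc t₀ ts, |G s| with hBdef
  have hInt0 : 0 ≤ ∫ s in Icc t₀ ts, |G s| :=
    setIntegral_nonneg measurableSet_Icc (fun x _ => abs_nonneg _)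
  have hut₀ : u t₀ = Real.log (y t₀^2 + 1) := rfl
  have main : ∀ s ∈ Ico t₀ t₁, u s ≤ B := by
    intro s hs
    rcases eq_or_lt_of_le hs.1 with heq | hlt
    · rw [← heq]; linarith
    · have hIccsub : Icc t₀ s ⊆ Ico t₀ t₁ := fun z hz => ⟨hz.1, lt_of_le_of_lt hz.2 hs.2⟩
      have hIccE : Icc t₀ s ⊆ eIco t₀ τ₀ := fun z hz => hIcoSub (hIccsub hz)
      have hIccTs : Icc t₀ s ⊆ Icc t₀ ts := Icc_subset_Icc le_rfl (hs.2.trans ht₁s).le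
      have hyc : ContinuousOn y (Icc t₀ s) := hycont.mono hIccsub
      have hne : ∀ t ∈ Icc t₀ s, y t ^ 2 + 1 ≠ 0 := fun t _ => by positivity
      have hucont : ContinuousOn u (Icc t₀ s) :=
        (((hyc.pow 2).add continuousOn_const).log hne)
      have hrhs : ContinuousOn (abelRHS a b c d y) (Icc t₀ s) := by
        have h0 : ContinuousOn
            (fun t => -(a t * y t^3 + b t * y t^2 + c t * y t + d t)) (Icc t₀ s) :=
          ((((ha.mono hIccE).mul (hyc.pow 3)).add
            ((hb.mono hIccE).mul (hyc.pow 2))).add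
            (((hc.mono hIccE).mul hyc).add (hd.mono hIccE))).neg.congr (fun t ht => by simp only [Pi.neg_apply, Pi.add_apply, Pi.mul_apply, Pi.pow_apply]; ring)
        exact h0
      have hu'cont : ContinuousOn u' (Icc t₀ s) := by
        apply ContinuousOn.div
        · exact (continuousOn_const.mul hyc).mul hrhs
        · exact (hyc.pow 2).add continuousOn_const
        · exact hne
      have hderiv : ∀ x ∈ Ioo t₀ s, HasDerivWithinAt u (u' x) (Ioi x) x := by
        intro x hx
        have hxI : x ∈ Ico t₀ t₁ := ⟨hx.1.le, lt_trans hx.2 hs.2⟩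
        have hmem : Ico t₀ t₁ ∈ 𝓝[Ioi x] x :=
          mem_nhdsWithin.mpr
            ⟨Iio t₁, isOpen_Iio, hxI.2, fun z hz => ⟨hxI.1.trans (le_of_lt hz.2), hz.1⟩⟩
        have h1 : HasDerivWithinAt y (abelRHS a b c d y x) (Ioi x) x :=
          (hy x hxI).mono_of_mem_nhdsWithin hmem
        have h2 : HasDerivWithinAt (fun t => y t ^ 2 + 1)
            (2 * y x * abelRHS a b c d y x) (Ioi x) x := by
          simpa [mul_assoc] using (h1.pow 2).add_const 1
        exact h2.log (by positivity)
      have hIIu' : IntervalIntegrable u' volume t₀ s :=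
        ContinuousOn.intervalIntegrable_of_Icc hlt.le hu'cont
      have hFTC : ∫ t in t₀..s, u' t = u s - u t₀ :=
        integral_eq_sub_of_hasDeriv_right_of_le hlt.le hucont hderiv hIIu'
      have hIIG : IntervalIntegrable (fun t => |G t|) volume t₀ s := by
        rw [intervalIntegrable_iff_integrableOn_Icc_of_le hlt.le]
        exact hGabs.mono_set hIccTs
      have hmono : ∫ t in t₀..s, u' t ≤ ∫ t in t₀..s, |G t| := by
        apply integral_mono_ae_restrict hlt.le hIIu' hIIG
        have hae : ∀ᵐ t ∂(volume.restrict (Icc t₀ s)), 0 < a t :=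
          ae_restrict_of_ae_restrict_of_subset hIccE hapos
        filter_upwards [hae] with t hta
        have key := abel_alg (a t) (b t) (c t) (d t) (y t) hta
        have hpos : (0:ℝ) < y t^2 + 1 := by positivity
        have hle : u' t ≤ G t := by
          rw [hu'def]
          simp only []
          rw [div_le_iff₀ hpos]
          have habel : 2 * y t * abelRHS a b c d y t
              = 2*(y t)*(-(a t*(y t)^3 + b t*(y t)^2 + c t*(y t) + d t)) := by
            simp [abelRHS]
          rw [habel]
          exact key
        exact hle.trans (le_abs_self _)
      have hlast : ∫ t in t₀..s, |G t| ≤ ∫ t in Icc t₀ ts, |G t| := by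
        rw [intervalIntegral.integral_of_le hlt.le]
        apply setIntegral_mono_set hGabs
          (Filter.Eventually.of_forall (fun x => abs_nonneg _))
        exact HasSubset.Subset.eventuallyLE
          (fun z hz => ⟨hz.1.le, hz.2.trans (hs.2.trans ht₁s).le⟩)
      linarith
  refine ⟨Real.exp B, fun t ht => ?_⟩
  have h1 : u t ≤ B := main t ht
  have h2 : y t^2 + 1 ≤ Real.exp B := (Real.log_le_iff_le_exp (by positivity)).mp h1
  nlinarith [sq_abs (y t), abs_nonneg (y t), sq_nonneg (|y t| - 1)]

lemma abel_continuation (t₀ : ℝ) (τ₀ : EReal)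
    (a b c d : ℝ → ℝ)
    (ha : ContinuousOn a (eIco t₀ τ₀)) (hb : ContinuousOn b (eIco t₀ τ₀))
    (hc : ContinuousOn c (eIco t₀ τ₀)) (hd : ContinuousOn d (eIco t₀ τ₀))
    (hapos : ∀ᵐ t ∂(volume.restrict (eIco t₀ τ₀)), 0 < a t)
    (hint : ∀ t : ℝ, t₀ < t → (t : EReal) < τ₀ →
      IntegrableOn (fun s => b s ^ 2 / a s) (Icc t₀ t))
    (t₁ : EReal) (y : ℝ → ℝ) (h01 : (t₀ : EReal) < t₁) (h1τ : t₁ < τ₀)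
    (hsol : IsAbelSolOn a b c d y (eIco t₀ t₁)) :
    ∃ (t₂ : EReal) (z : ℝ → ℝ), t₁ < t₂ ∧ t₂ ≤ τ₀ ∧
      IsAbelSolOn a b c d z (eIco t₀ t₂) ∧ EqOn z y (eIco t₀ t₁) := by
  -- t₁ is a real number
  have hbot : t₁ ≠ ⊥ := ne_bot_of_gt h01
  have htop : t₁ ≠ ⊤ := (h1τ.trans_le le_top).ne
  set r : ℝ := t₁.toReal with hrdef
  have ht₁r : t₁ = (r : EReal) := (EReal.coe_toReal htop hbot).symm
  have h01r : t₀ < r := EReal.coe_lt_coe_iff.mp (ht₁r ▸ h01)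
  have hrτ : (r : EReal) < τ₀ := ht₁r ▸ h1τ
  have hrE : r ∈ eIco t₀ τ₀ := ⟨h01r.le, hrτ⟩
  have hIccE : Icc t₀ r ⊆ eIco t₀ τ₀ := fun z hz =>
    ⟨hz.1, lt_of_le_of_lt (EReal.coe_le_coe_iff.mpr hz.2) hrτ⟩
  have hIcoE : Ico t₀ r ⊆ eIco t₀ τ₀ := fun z hz => hIccE ⟨hz.1, hz.2.le⟩
  have hIooE : Ioo t₀ r ⊆ eIco t₀ τ₀ := fun z hz => hIccE ⟨hz.1.le, hz.2.le⟩
  have hsolIco : ∀ t ∈ Ico t₀ r, HasDerivWithinAt y (abelRHS a b c d y t) (Ico t₀ r) t := by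
    have h := hsol
    rw [ht₁r, eIco_coe] at h
    exact h
  -- a priori bound
  obtain ⟨R, hR⟩ := abel_bound t₀ τ₀ a b c d ha hb hc hd hapos hint r h01r hrτ y hsolIco
  have hR0 : 0 ≤ R := le_trans (abs_nonneg _) (hR t₀ ⟨le_rfl, h01r⟩)
  -- bound on coefficients on Icc t₀ r
  obtain ⟨Ka, hKa⟩ := isCompact_Icc.exists_bound_of_continuousOn (ha.mono hIccE)
  obtain ⟨Kb, hKb⟩ := isCompact_Icc.exists_bound_of_continuousOn (hb.mono hIccE)
  obtain ⟨Kc, hKc⟩ := isCompact_Icc.exists_bound_of_continuousOn (hc.mono hIccE)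
  obtain ⟨Kd, hKd⟩ := isCompact_Icc.exists_bound_of_continuousOn (hd.mono hIccE)
  set K : ℝ := max (max (max Ka Kb) (max Kc Kd)) 0 with hK
  have hK0 : 0 ≤ K := le_max_right _ _
  have hKa' : ∀ t ∈ Icc t₀ r, |a t| ≤ K := fun t ht =>
    (hKa t ht).trans (le_max_of_le_left (le_max_of_le_left (le_max_left _ _)))
  have hKb' : ∀ t ∈ Icc t₀ r, |b t| ≤ K := fun t ht =>
    (hKb t ht).trans (le_max_of_le_left (le_max_of_le_left (le_max_right _ _)))
  have hKc' : ∀ t ∈ Icc t₀ r, |c t| ≤ K := fun t ht =>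
    (hKc t ht).trans (le_max_of_le_left (le_max_of_le_right (le_max_left _ _)))
  have hKd' : ∀ t ∈ Icc t₀ r, |d t| ≤ K := fun t ht =>
    (hKd t ht).trans (le_max_of_le_left (le_max_of_le_right (le_max_right _ _)))
  set C : ℝ := K * (R^3 + R^2 + R + 1) with hCdef
  have hC0 : 0 ≤ C := by positivity
  have hDbound : ∀ t ∈ Ico t₀ r, ‖abelRHS a b c d y t‖₊ ≤ C.toNNReal := by
    intro t ht
    have htI : t ∈ Icc t₀ r := ⟨ht.1, ht.2.le⟩
    have hyR := hR t ht
    rw [← NNReal.coe_le_coe, coe_nnnorm, Real.coe_toNNReal' C]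
    refine le_trans ?_ (le_max_left _ _)
    have hnorm : ‖abelRHS a b c d y t‖ = |a t * y t^3 + b t * y t^2 + c t * y t + d t| := by
      simp only [abelRHS, norm_neg, Real.norm_eq_abs]
    rw [hnorm]
    have h1 := hKa' t htI; have h2 := hKb' t htI; have h3 := hKc' t htI; have h4 := hKd' t htI
    have hy3 : |y t|^3 ≤ R^3 := pow_le_pow_left₀ (abs_nonneg _) hyR 3
    have hy2 : |y t|^2 ≤ R^2 := pow_le_pow_left₀ (abs_nonneg _) hyR 2
    calc |a t * y t^3 + b t * y t^2 + c t * y t + d t|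
        ≤ |a t * y t^3 + b t * y t^2| + |c t * y t| + |d t| := abs_add_three _ _ _
    _ ≤ |a t * y t^3| + |b t * y t^2| + |c t * y t| + |d t| := by
        have := abs_add_le (a t * y t^3) (b t * y t^2); linarith
    _ = |a t| * |y t|^3 + |b t| * |y t|^2 + |c t| * |y t| + |d t| := by
        rw [abs_mul, abs_mul, abs_mul, abs_pow, abs_pow]
    _ ≤ K * R^3 + K * R^2 + K * R + K := by
        gcongr <;> first
          | assumption
          | positivity
          | nlinarith [abs_nonneg (a t), abs_nonneg (b t), abs_nonneg (c t), abs_nonneg (y t)]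
    _ = C := by rw [hCdef]; ring
  have hlip : LipschitzOnWith C.toNNReal y (Ico t₀ r) :=
    (convex_Ico t₀ r).lipschitzOnWith_of_nnnorm_hasDerivWithin_le hsolIco hDbound
  obtain ⟨g, hgl, hgy⟩ := hlip.extend_real
  set L : ℝ := g r with hLdef
  have hyL : Tendsto y (𝓝[Ico t₀ r] r) (𝓝 L) := by
    have hgt : Tendsto g (𝓝[Ico t₀ r] r) (𝓝 L) :=
      (hgl.continuous.tendsto r).mono_left nhdsWithin_le_nhds
    refine hgt.congr' ?_
    exact eventually_of_mem self_mem_nhdsWithin (fun x hx => (hgy hx).symm)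
  -- local solution starting at (r, L)
  obtain ⟨m, hrm, hmτ, w, hw0, hw⟩ :=
    abel_local_exists t₀ τ₀ a b c d ha hb hc hd r h01r.le hrτ L
  set z : ℝ → ℝ := fun t => if t < r then y t else w t with hzdef
  have hzy : ∀ x, x < r → z x = y x := fun x hx => if_pos hx
  have hzw : ∀ x, r ≤ x → z x = w x := fun x hx => if_neg (not_lt.mpr hx)
  set e : ℝ := -(a r * L^3 + b r * L^2 + c r * L + d r) with hedef
  have hsolz : IsAbelSolOn a b c d z (eIco t₀ (m : EReal)) := by
    rw [eIco_coe]
    intro t ht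
    rcases lt_trichotomy t r with htr | htr | htr
    · -- t < r : use y
      have h0 := hsolIco t ⟨ht.1, htr⟩
      have hmem : Ico t₀ r ∈ 𝓝[Ico t₀ m] t :=
        mem_nhdsWithin.mpr ⟨Iio r, isOpen_Iio, htr, fun x hx => ⟨hx.2.1, hx.1⟩⟩
      have h1 := h0.mono_of_mem_nhdsWithin hmem
      have heq : z =ᶠ[𝓝[Ico t₀ m] t] y :=
        eventually_of_mem (mem_nhdsWithin_of_mem_nhds (Iio_mem_nhds htr))
          (fun x hx => hzy x hx)
      have h2 := h1.congr_of_eventuallyEq heq (hzy t htr)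
      have hval : abelRHS a b c d z t = abelRHS a b c d y t := by
        simp only [abelRHS]; rw [hzy t htr]
      rw [hval]; exact h2
    · -- t = r : glue
      subst htr
      have hzr : z r = L := by rw [hzw r le_rfl, hw0]
      have hder : ∀ x ∈ Ioo t₀ r, HasDerivAt z (abelRHS a b c d y x) x := by
        intro x hx
        have h0 := hsolIco x ⟨hx.1.le, hx.2⟩
        have hda : HasDerivAt y (abelRHS a b c d y x) x :=
          h0.hasDerivAt (Ico_mem_nhds hx.1 hx.2)
        exact hda.congr_of_eventuallyEq
          (eventually_of_mem (Iio_mem_nhds hx.2) (fun u hu => hzy u hu))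
      have hsIoo : Ioo t₀ r ∈ 𝓝[<] r := Ioo_mem_nhdsLT_of_mem ⟨h01r, le_rfl⟩
      have hyIoo : Tendsto y (𝓝[Ioo t₀ r] r) (𝓝 L) :=
        hyL.mono_left (nhdsWithin_mono r Ioo_subset_Ico_self)
      have htendl : Tendsto (fun x => abelRHS a b c d y x) (𝓝[Ioo t₀ r] r) (𝓝 e) := by
        have hal : Tendsto a (𝓝[Ioo t₀ r] r) (𝓝 (a r)) :=
          (ha.continuousWithinAt hrE).mono_left (nhdsWithin_mono r hIooE)
        have hbl : Tendsto b (𝓝[Ioo t₀ r] r) (𝓝 (b r)) :=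
          (hb.continuousWithinAt hrE).mono_left (nhdsWithin_mono r hIooE)
        have hcl : Tendsto c (𝓝[Ioo t₀ r] r) (𝓝 (c r)) :=
          (hc.continuousWithinAt hrE).mono_left (nhdsWithin_mono r hIooE)
        have hdl : Tendsto d (𝓝[Ioo t₀ r] r) (𝓝 (d r)) :=
          (hd.continuousWithinAt hrE).mono_left (nhdsWithin_mono r hIooE)
        have hmain := ((((hal.mul (hyIoo.pow 3)).add (hbl.mul (hyIoo.pow 2))).add
          (hcl.mul hyIoo)).add hdl).neg
        have heqf : (fun x => abelRHS a b c d y x)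
            = fun x => -(a x * y x ^ 3 + b x * y x ^ 2 + c x * y x + d x) := by
          funext x; simp only [abelRHS]
        rw [heqf, hedef]
        exact hmain
      have hleft : HasDerivWithinAt z e (Iic r) r := by
        apply hasDerivWithinAt_Iic_of_tendsto_deriv (s := Ioo t₀ r)
        · intro x hx
          exact (hder x hx).differentiableAt.differentiableWithinAt
        · have hztend : Tendsto z (𝓝[Ioo t₀ r] r) (𝓝 L) := by
            refine hyIoo.congr' ?_
            exact eventually_of_mem self_mem_nhdsWithin (fun x hx => (hzy x hx.2).symm)
          rw [ContinuousWithinAt, hzr]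
          exact hztend
        · exact hsIoo
        · have hderiv_eq : (fun x => deriv z x) =ᶠ[𝓝[<] r] (fun x => abelRHS a b c d y x) :=
            eventually_of_mem hsIoo (fun x hx => (hder x hx).deriv)
          exact (htendl.mono_left (nhdsWithin_le_of_mem hsIoo)).congr' hderiv_eq.symm
      have hright : HasDerivWithinAt z e (Icc r m) r := by
        have h0 := hw r (left_mem_Icc.mpr hrm.le)
        have hval : abelRHS a b c d w r = e := by
          simp only [abelRHS]; rw [hw0, hedef]
        rw [hval] at h0
        exact h0.congr (fun x hx => hzw x hx.1) (hzw r le_rfl)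
      have hvalz : abelRHS a b c d z r = e := by
        simp only [abelRHS]; rw [hzr, hedef]
      rw [hvalz]
      refine (hleft.union hright).mono (fun x hx => ?_)
      rcases le_or_gt x r with h | h
      · exact Or.inl h
      · exact Or.inr ⟨h.le, hx.2.le⟩
    · -- r < t : use w
      have h0 := hw t ⟨htr.le, ht.2.le⟩
      have hmem : Icc r m ∈ 𝓝[Ico t₀ m] t :=
        mem_nhdsWithin.mpr ⟨Ioi r, isOpen_Ioi, htr, fun x hx => ⟨hx.1.le, hx.2.2.le⟩⟩
      have h1 := h0.mono_of_mem_nhdsWithin hmem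
      have heq : z =ᶠ[𝓝[Ico t₀ m] t] w :=
        eventually_of_mem (mem_nhdsWithin_of_mem_nhds (Ioi_mem_nhds htr))
          (fun x hx => hzw x (le_of_lt hx))
      have h2 := h1.congr_of_eventuallyEq heq (hzw t htr.le)
      have hval : abelRHS a b c d z t = abelRHS a b c d w t := by
        simp only [abelRHS]; rw [hzw t htr.le]
      rw [hval]; exact h2
  refine ⟨(m : EReal), z, ?_, hmτ.le, hsolz, ?_⟩
  · rw [ht₁r]; exact EReal.coe_lt_coe_iff.mpr hrm
  · rw [ht₁r, eIco_coe]
    exact fun x hx => hzy x hx.2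

end AbelAux

/-- Theorem 2.1: if `a > 0` a.e. on `[t₀, τ₀)` and `b²/a` is locally integrable there, then
every noncontinuable solution of the Abel equation (1.1) on `[t₀, t₁) ⊆ [t₀, τ₀)` satisfies
`t₁ = τ₀`; in particular every initial value problem has a solution on all of `[t₀, τ₀)`. -/
theorem stmt_2 (t₀ : ℝ) (τ₀ : EReal) (hτ : (t₀ : EReal) < τ₀)
    (a b c d : ℝ → ℝ)
    (ha : ContinuousOn a (eIco t₀ τ₀)) (hb : ContinuousOn b (eIco t₀ τ₀))
    (hc : ContinuousOn c (eIco t₀ τ₀)) (hd : ContinuousOn d (eIco t₀ τ₀))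
    (hapos : ∀ᵐ t ∂(volume.restrict (eIco t₀ τ₀)), 0 < a t)
    (hint : ∀ t : ℝ, t₀ < t → (t : EReal) < τ₀ →
      IntegrableOn (fun s => b s ^ 2 / a s) (Icc t₀ t)) :
    (∀ (t₁ : EReal) (y : ℝ → ℝ), (t₀ : EReal) < t₁ → t₁ ≤ τ₀ →
        IsAbelSolOn a b c d y (eIco t₀ t₁) →
        Noncontinuable a b c d t₀ τ₀ t₁ y → t₁ = τ₀) ∧
      ∀ γ : ℝ, ∃ y : ℝ → ℝ, y t₀ = γ ∧ IsAbelSolOn a b c d y (eIco t₀ τ₀) := by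
  have part1 : ∀ (t₁ : EReal) (y : ℝ → ℝ), (t₀ : EReal) < t₁ → t₁ ≤ τ₀ →
      IsAbelSolOn a b c d y (eIco t₀ t₁) →
      Noncontinuable a b c d t₀ τ₀ t₁ y → t₁ = τ₀ := by
    intro t₁ y h1 h2 hsol hnc
    by_contra hne
    exact hnc (abel_continuation t₀ τ₀ a b c d ha hb hc hd hapos hint t₁ y h1
      (lt_of_le_of_ne h2 hne) hsol)
  refine ⟨part1, ?_⟩
  intro γ
  classical
  -- Zorn's lemma construction of a maximal (noncontinuable) solution
  set S : Set (EReal × (ℝ → ℝ)) :=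
    {p | (t₀ : EReal) < p.1 ∧ p.1 ≤ τ₀ ∧ IsAbelSolOn a b c d p.2 (eIco t₀ p.1) ∧ p.2 t₀ = γ}
    with hSdef
  have hbase : ∃ p : EReal × (ℝ → ℝ), p ∈ S := by
    obtain ⟨m, htm, hmτ, w, hw0, hw⟩ :=
      abel_local_exists t₀ τ₀ a b c d ha hb hc hd t₀ le_rfl hτ γ
    refine ⟨((m : EReal), w), EReal.coe_lt_coe_iff.mpr htm, hmτ.le, ?_, hw0⟩
    rw [eIco_coe]
    intro t ht
    exact (hw t ⟨ht.1, ht.2.le⟩).mono Ico_subset_Icc_self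
  obtain ⟨p₀, hp₀⟩ := hbase
  let α := {p : EReal × (ℝ → ℝ) // p ∈ S}
  let rel : α → α → Prop := fun p q => p.1.1 ≤ q.1.1 ∧ EqOn q.1.2 p.1.2 (eIco t₀ p.1.1)
  have htrans : ∀ {x y z : α}, rel x y → rel y z → rel x z := by
    rintro x y z ⟨h1, h2⟩ ⟨h3, h4⟩
    refine ⟨h1.trans h3, fun t ht => ?_⟩
    have htY : t ∈ eIco t₀ y.1.1 := ⟨ht.1, lt_of_lt_of_le ht.2 h1⟩
    rw [h4 htY, h2 ht]
  have hchains : ∀ cs : Set α, IsChain rel cs → ∃ ub : α, ∀ q ∈ cs, rel q ub := by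
    intro cs hchain
    rcases cs.eq_empty_or_nonempty with rfl | hcne
    · exact ⟨⟨p₀, hp₀⟩, fun q hq => absurd hq (notMem_empty q)⟩
    set T : EReal := sSup ((fun p : α => p.1.1) '' cs) with hTdef
    have hTle : T ≤ τ₀ := sSup_le (by rintro x ⟨p, hp, rfl⟩; exact p.2.2.1)
    obtain ⟨q₀, hq₀⟩ := hcne
    have ht₀T : (t₀ : EReal) < T :=
      lt_of_lt_of_le q₀.2.1 (le_sSup ⟨q₀, hq₀, rfl⟩)
    set Y : ℝ → ℝ := fun t =>
      if h : ∃ p : α, p ∈ cs ∧ t ∈ eIco t₀ p.1.1 then h.choose.1.2 t else γ with hYdef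
    have hYeq : ∀ q ∈ cs, EqOn Y q.1.2 (eIco t₀ q.1.1) := by
      intro q hq t ht
      have hex : ∃ p : α, p ∈ cs ∧ t ∈ eIco t₀ p.1.1 := ⟨q, hq, ht⟩
      have hY : Y t = hex.choose.1.2 t := by
        rw [hYdef]; exact dif_pos hex
      rw [hY]
      obtain ⟨hpc, hpt⟩ := hex.choose_spec
      rcases eq_or_ne hex.choose q with heqq | hne
      · rw [heqq]
      · rcases hchain hpc hq hne with ⟨_, hr⟩ | ⟨_, hr⟩
        · exact (hr hpt).symm
        · exact hr ht
    have hYsol : IsAbelSolOn a b c d Y (eIco t₀ T) := by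
      intro t ht
      obtain ⟨x, ⟨p, hpc, rfl⟩, hxp⟩ := lt_sSup_iff.mp ht.2
      have htp : t ∈ eIco t₀ p.1.1 := ⟨ht.1, hxp⟩
      obtain ⟨ρ, hρ1, hρ2⟩ := EReal.exists_between_coe_real hxp
      have hρr : t < ρ := EReal.coe_lt_coe_iff.mp hρ1
      have hmem : eIco t₀ p.1.1 ∈ nhdsWithin t (eIco t₀ T) :=
        mem_nhdsWithin.mpr ⟨Iio ρ, isOpen_Iio, hρr,
          fun x hx => ⟨hx.2.1, lt_trans (EReal.coe_lt_coe_iff.mpr hx.1) hρ2⟩⟩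
      have h1 := (p.2.2.2.1 t htp).mono_of_mem_nhdsWithin hmem
      have heq : Y =ᶠ[nhdsWithin t (eIco t₀ T)] p.1.2 :=
        Filter.eventually_of_mem hmem (fun x hx => hYeq p hpc hx)
      have h2 := h1.congr_of_eventuallyEq heq (hYeq p hpc htp)
      have hval : abelRHS a b c d Y t = abelRHS a b c d p.1.2 t := by
        simp only [abelRHS]; rw [hYeq p hpc htp]
      rw [hval]; exact h2
    have hYinit : Y t₀ = γ := by
      have h1 := hYeq q₀ hq₀ (⟨le_rfl, q₀.2.1⟩ : t₀ ∈ eIco t₀ q₀.1.1)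
      rw [h1]; exact q₀.2.2.2.2
    refine ⟨⟨(T, Y), ht₀T, hTle, hYsol, hYinit⟩, fun q hq => ⟨le_sSup ⟨q, hq, rfl⟩, hYeq q hq⟩⟩
  obtain ⟨mx, hmx⟩ := exists_maximal_of_chains_bounded hchains @htrans
  have hnc : Noncontinuable a b c d t₀ τ₀ mx.1.1 mx.1.2 := by
    rintro ⟨t₂, z, hlt, hle, hsolz, heqz⟩
    have hz0 : z t₀ = γ := by
      rw [heqz (⟨le_rfl, mx.2.1⟩ : t₀ ∈ eIco t₀ mx.1.1)]
      exact mx.2.2.2.2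
    have hrel : rel mx ⟨(t₂, z), lt_trans mx.2.1 hlt, hle, hsolz, hz0⟩ := ⟨hlt.le, heqz⟩
    exact absurd (hmx _ hrel).1 (not_le.mpr hlt)
  have hfin : mx.1.1 = τ₀ := part1 mx.1.1 mx.1.2 mx.2.1 mx.2.2.1 mx.2.2.2.1 hnc
  exact ⟨mx.1.2, mx.2.2.2.2, hfin ▸ mx.2.2.2.1⟩
end

section
/- Suppose τ₀ < +∞, the functions a, b, c, d are continuous on the closed interval [t₀, τ₀], a(t) > 0 for Lebesgue-almost every t ∈ [t₀, τ₀], and the function t ↦ b(t)²/a(t) is Lebesgue integrable on [t₀, τ₀]. Then every solution y of the Abel equation (1.1) on [t₀, τ₀) is bounded on [t₀, τ₀) and extends to a solution of (1.1) on the closed interval [t₀, τ₀]. -/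
open Set MeasureTheory intervalIntegral
open Filter Topology

/-- Remark 2.1: for `τ₀ < ∞`, with `a > 0` a.e. on `[t₀, τ₀]` and `b²/a` integrable on
`[t₀, τ₀]`, every solution of (1.1) on `[t₀, τ₀)` is bounded and extends to a solution
on the closed interval `[t₀, τ₀]`. -/
theorem stmt_3 (t₀ τ₀ : ℝ) (hτ : t₀ < τ₀)
    (a b c d : ℝ → ℝ)
    (ha : ContinuousOn a (Icc t₀ τ₀)) (hb : ContinuousOn b (Icc t₀ τ₀))
    (hc : ContinuousOn c (Icc t₀ τ₀)) (hd : ContinuousOn d (Icc t₀ τ₀))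
    (hapos : ∀ᵐ t ∂(volume.restrict (Icc t₀ τ₀)), 0 < a t)
    (hint : IntegrableOn (fun s => b s ^ 2 / a s) (Icc t₀ τ₀))
    (y : ℝ → ℝ) (hy : IsAbelSolOn a b c d y (Ico t₀ τ₀)) :
    (∃ M : ℝ, ∀ t ∈ Ico t₀ τ₀, |y t| ≤ M) ∧
      ∃ z : ℝ → ℝ, IsAbelSolOn a b c d z (Icc t₀ τ₀) ∧ EqOn z y (Ico t₀ τ₀) := by
  have hIcoIcc : Ico t₀ τ₀ ⊆ Icc t₀ τ₀ := Ico_subset_Icc_self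
  set f : ℝ → ℝ := fun t => abelRHS a b c d y t with hf_def
  have hyc : ContinuousOn y (Ico t₀ τ₀) := fun t ht => (hy t ht).continuousWithinAt
  have hfc : ContinuousOn f (Ico t₀ τ₀) := by
    have ha' := ha.mono hIcoIcc
    have hb' := hb.mono hIcoIcc
    have hc' := hc.mono hIcoIcc
    have hd' := hd.mono hIcoIcc
    simp only [hf_def, abelRHS]
    exact ((((ha'.mul (hyc.pow 3)).add (hb'.mul (hyc.pow 2))).add
      (hc'.mul hyc)).add hd').neg
  have hyD : ∀ x ∈ Ioo t₀ τ₀, HasDerivAt y (f x) x := fun x hx =>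
    (hy x (Ioo_subset_Ico_self hx)).hasDerivAt
      (Filter.mem_of_superset (Ioo_mem_nhds hx.1 hx.2) Ioo_subset_Ico_self)
  -- the integrable comparison function
  set g : ℝ → ℝ := fun s => b s ^ 2 / a s + (2 * |c s| + |d s|) with hg_def
  have hgint : IntegrableOn g (Icc t₀ τ₀) := by
    apply hint.add
    exact (((hc.abs.integrableOn_Icc).const_mul 2).add hd.abs.integrableOn_Icc)
  have hgpos : 0 ≤ᵐ[volume.restrict (Icc t₀ τ₀)] g := by
    filter_upwards [hapos] with x hx
    have h1 : (0:ℝ) ≤ b x ^ 2 / a x := div_nonneg (sq_nonneg _) hx.le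
    have h2 : (0:ℝ) ≤ 2 * |c x| + |d x| := by positivity
    simp only [hg_def, Pi.zero_apply]; linarith
  set Cst : ℝ := ∫ x in Icc t₀ τ₀, g x with hCst_def
  -- the derivative of H = log (1 + y²)
  set Hd : ℝ → ℝ := fun x => (1 + y x ^ 2)⁻¹ * (2 * y x * f x) with hHd_def
  set H : ℝ → ℝ := fun s => Real.log (1 + y s ^ 2) with hH_def
  -- key a.e. pointwise bound Hd ≤ g
  have hkey : ∀ᵐ x ∂(volume.restrict (Icc t₀ τ₀)), Hd x ≤ g x := by
    filter_upwards [hapos] with x hax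
    have h1 : (0:ℝ) < 1 + y x ^ 2 := by positivity
    have hB : b x ^ 2 / a x * a x = b x ^ 2 := div_mul_cancel₀ _ (ne_of_gt hax)
    have hbr : 0 ≤ b x ^ 2 / a x * (1 + y x ^ 2) + 2 * a x * y x ^ 4 + 2 * b x * y x ^ 3 := by
      have hmul : 0 ≤ (b x ^ 2 / a x * (1 + y x ^ 2) + 2 * a x * y x ^ 4 + 2 * b x * y x ^ 3)
          * a x := by
        nlinarith [sq_nonneg (b x * y x + a x * y x ^ 2), sq_nonneg (a x * y x ^ 2),
          sq_nonneg (b x), sq_nonneg (b x * y x)]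
      by_contra hcon
      push_neg at hcon
      nlinarith
    have hc1 : 0 ≤ (|c x| + c x) * y x ^ 2 :=
      mul_nonneg (by linarith [neg_abs_le (c x)]) (sq_nonneg _)
    have hd1 : -|d x * y x| ≤ d x * y x := neg_abs_le _
    have hd2 : |d x * y x| = |d x| * |y x| := abs_mul _ _
    have hd3 : 2 * (|d x| * |y x|) ≤ |d x| * (1 + y x ^ 2) := by
      rw [← sq_abs (y x)]
      nlinarith [mul_nonneg (abs_nonneg (d x)) (sq_nonneg (|y x| - 1))]
    simp only [hHd_def, hf_def, abelRHS, hg_def]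
    rw [inv_mul_eq_div, div_le_iff₀ h1]
    nlinarith [hbr, hc1, hd1, hd2, hd3, abs_nonneg (c x)]
  -- the fundamental-theorem bound
  have hbound : ∀ t ∈ Ico t₀ τ₀, H t ≤ H t₀ + Cst := by
    intro t ht
    have hIccsub : Icc t₀ t ⊆ Ico t₀ τ₀ := fun s hs => ⟨hs.1, lt_of_le_of_lt hs.2 ht.2⟩
    have hHcont : ContinuousOn H (Icc t₀ t) := by
      apply ContinuousOn.log
      · exact continuousOn_const.add ((hyc.mono hIccsub).pow 2)
      · intro s _; positivity
    have hHderiv : ∀ x ∈ Ioo t₀ t, HasDerivWithinAt H (Hd x) (Ioi x) x := by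
      intro x hx
      have hx' : x ∈ Ioo t₀ τ₀ := ⟨hx.1, hx.2.trans ht.2⟩
      have h2 : HasDerivAt (fun s => 1 + y s ^ 2) (2 * y x * f x) x := by
        have := ((hyD x hx').fun_pow 2).const_add 1
        refine this.congr_deriv ?_
        push_cast
        ring
      have hne : (1 + y x ^ 2) ≠ 0 := by positivity
      exact ((Real.hasDerivAt_log hne).comp x h2).hasDerivWithinAt
    have hHdint : IntervalIntegrable Hd volume t₀ t := by
      apply ContinuousOn.intervalIntegrable
      rw [uIcc_of_le ht.1]
      have hy' := hyc.mono hIccsub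
      have hf' := hfc.mono hIccsub
      exact (continuousOn_const.add (hy'.pow 2)).inv₀ (fun s _ => by simp only [Pi.add_apply, Pi.pow_apply]; positivity)
        |>.mul ((continuousOn_const.mul hy').mul hf')
    have hFTC : ∫ u in t₀..t, Hd u = H t - H t₀ :=
      integral_eq_sub_of_hasDeriv_right_of_le ht.1 hHcont hHderiv hHdint
    have hgint' : IntervalIntegrable g volume t₀ t :=
      (intervalIntegrable_iff_integrableOn_Icc_of_le ht.1).mpr
        (hgint.mono_set (Icc_subset_Icc le_rfl ht.2.le))
    have hmono : ∫ u in t₀..t, Hd u ≤ ∫ u in t₀..t, g u :=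
      intervalIntegral.integral_mono_ae_restrict ht.1 hHdint hgint'
        (ae_restrict_of_ae_restrict_of_subset (Icc_subset_Icc le_rfl ht.2.le) hkey)
    have hgCst : ∫ u in t₀..t, g u ≤ Cst := by
      rw [intervalIntegral.integral_of_le ht.1]
      exact setIntegral_mono_set hgint hgpos
        ((Ioc_subset_Icc_self.trans (Icc_subset_Icc le_rfl ht.2.le)).eventuallyLE)
    linarith
  -- boundedness
  set M : ℝ := Real.sqrt ((1 + y t₀ ^ 2) * Real.exp Cst) with hM_def
  have hMb : ∀ t ∈ Ico t₀ τ₀, |y t| ≤ M := by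
    intro t ht
    have h1 : (0:ℝ) < 1 + y t ^ 2 := by positivity
    have h2 : (0:ℝ) < (1 + y t₀ ^ 2) * Real.exp Cst := by positivity
    have h3 : 1 + y t ^ 2 ≤ (1 + y t₀ ^ 2) * Real.exp Cst := by
      rw [← Real.log_le_log_iff h1 h2, Real.log_mul (by positivity) (Real.exp_ne_zero _),
        Real.log_exp]
      exact hbound t ht
    calc |y t| = Real.sqrt (y t ^ 2) := (Real.sqrt_sq_eq_abs _).symm
      _ ≤ M := Real.sqrt_le_sqrt (by linarith)
  refine ⟨⟨M, hMb⟩, ?_⟩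
  have hM0 : 0 ≤ M := Real.sqrt_nonneg _
  -- a uniform bound for f on [t₀, τ₀)
  obtain ⟨A, hA⟩ := isCompact_Icc.exists_bound_of_continuousOn ha
  obtain ⟨B, hB⟩ := isCompact_Icc.exists_bound_of_continuousOn hb
  obtain ⟨C, hC⟩ := isCompact_Icc.exists_bound_of_continuousOn hc
  obtain ⟨D, hD⟩ := isCompact_Icc.exists_bound_of_continuousOn hd
  have ht₀Icc : t₀ ∈ Icc t₀ τ₀ := ⟨le_rfl, hτ.le⟩
  have hA0 : 0 ≤ A := (norm_nonneg _).trans (hA t₀ ht₀Icc)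
  have hB0 : 0 ≤ B := (norm_nonneg _).trans (hB t₀ ht₀Icc)
  have hC0 : 0 ≤ C := (norm_nonneg _).trans (hC t₀ ht₀Icc)
  have hD0 : 0 ≤ D := (norm_nonneg _).trans (hD t₀ ht₀Icc)
  set K : ℝ := A * M ^ 3 + B * M ^ 2 + C * M + D with hK_def
  have hfK : ∀ s ∈ Ico t₀ τ₀, ‖f s‖ ≤ K := by
    intro s hs
    have hys := hMb s hs
    have hy0 : 0 ≤ |y s| := abs_nonneg _
    have h1 : |f s| ≤ |a s| * |y s| ^ 3 + |b s| * |y s| ^ 2 + |c s| * |y s| + |d s| := by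
      simp only [hf_def, abelRHS, abs_neg]
      calc |a s * y s ^ 3 + b s * y s ^ 2 + c s * y s + d s|
          ≤ |a s * y s ^ 3 + b s * y s ^ 2 + c s * y s| + |d s| := abs_add_le _ _
        _ ≤ (|a s * y s ^ 3 + b s * y s ^ 2| + |c s * y s|) + |d s| := by
            gcongr; exact abs_add_le _ _
        _ ≤ ((|a s * y s ^ 3| + |b s * y s ^ 2|) + |c s * y s|) + |d s| := by
            gcongr; exact abs_add_le _ _
        _ = |a s| * |y s| ^ 3 + |b s| * |y s| ^ 2 + |c s| * |y s| + |d s| := by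
            rw [abs_mul, abs_mul, abs_mul, abs_pow, abs_pow]
    have h2 : |a s| * |y s| ^ 3 + |b s| * |y s| ^ 2 + |c s| * |y s| + |d s| ≤ K := by
      have has := hA s (hIcoIcc hs)
      have hbs := hB s (hIcoIcc hs)
      have hcs := hC s (hIcoIcc hs)
      have hds := hD s (hIcoIcc hs)
      rw [Real.norm_eq_abs] at has hbs hcs hds
      rw [hK_def]
      gcongr
    calc ‖f s‖ = |f s| := Real.norm_eq_abs _
      _ ≤ K := h1.trans h2
  -- f is integrable on [t₀, τ₀)
  have hfint : IntegrableOn f (Ico t₀ τ₀) := by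
    refine ⟨hfc.aestronglyMeasurable measurableSet_Ico, ?_⟩
    apply HasFiniteIntegral.restrict_of_bounded (C := K)
    · rw [Real.volume_Ico]; exact ENNReal.ofReal_lt_top
    · exact (ae_restrict_iff' measurableSet_Ico).mpr (Filter.Eventually.of_forall hfK)
  set g0 : ℝ → ℝ := (Ico t₀ τ₀).indicator f with hg0_def
  have hg0int : Integrable g0 volume := hfint.integrable_indicator measurableSet_Ico
  set z : ℝ → ℝ := fun t => y t₀ + ∫ s in t₀..t, g0 s with hz_def
  have hzc : Continuous z :=
    continuous_const.add (intervalIntegral.continuous_primitive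
      (fun _ _ => hg0int.intervalIntegrable) t₀)
  have hz_eq : EqOn z y (Ico t₀ τ₀) := by
    intro t ht
    have hIccsub : Icc t₀ t ⊆ Ico t₀ τ₀ := fun s hs => ⟨hs.1, lt_of_le_of_lt hs.2 ht.2⟩
    have h1 : ∫ s in t₀..t, g0 s = ∫ s in t₀..t, f s := by
      apply intervalIntegral.integral_congr
      intro s hs
      rw [uIcc_of_le ht.1] at hs
      exact indicator_of_mem (hIccsub hs) f
    have h2 : ∫ s in t₀..t, f s = y t - y t₀ :=
      integral_eq_sub_of_hasDeriv_right_of_le ht.1 (hyc.mono hIccsub)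
        (fun x hx => (hyD x ⟨hx.1, hx.2.trans ht.2⟩).hasDerivWithinAt)
        ((intervalIntegrable_iff_integrableOn_Icc_of_le ht.1).mpr (hfint.mono_set hIccsub))
    simp only [hz_def, h1, h2]
    ring
  refine ⟨z, ?_, hz_eq⟩
  intro t ht
  rcases lt_or_eq_of_le ht.2 with hlt | heq
  · -- interior/left part
    have ht' : t ∈ Ico t₀ τ₀ := ⟨ht.1, hlt⟩
    have hmem : Ico t₀ τ₀ ∈ 𝓝[Icc t₀ τ₀] t :=
      mem_nhdsWithin.mpr ⟨Iio τ₀, isOpen_Iio, hlt, fun s hs => ⟨hs.2.1, hs.1⟩⟩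
    have h1 : HasDerivWithinAt y (f t) (Icc t₀ τ₀) t :=
      (hy t ht').mono_of_mem_nhdsWithin hmem
    have h2 : HasDerivWithinAt z (f t) (Icc t₀ τ₀) t :=
      h1.congr_of_eventuallyEq
        (Filter.eventually_of_mem hmem (fun s hs => hz_eq hs)) (hz_eq ht')
    have h3 : abelRHS a b c d z t = f t := by
      simp only [hf_def, abelRHS, hz_eq ht']
    rw [h3]
    exact h2
  · -- right endpoint
    subst heq
    have hzD : ∀ x ∈ Ioo t₀ t, HasDerivAt z (f x) x := by
      intro x hx
      refine (hyD x hx).congr_of_eventuallyEq ?_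
      exact Filter.eventually_of_mem
        (Filter.mem_of_superset (Ioo_mem_nhds hx.1 hx.2) Ioo_subset_Ico_self)
        (fun s hs => hz_eq hs)
    have hdiff : DifferentiableOn ℝ z (Ioo t₀ t) :=
      fun x hx => ((hzD x hx).differentiableAt).differentiableWithinAt
    set F : ℝ → ℝ := fun s => -(a s * z s ^ 3 + b s * z s ^ 2 + c s * z s + d s) with hF_def
    have hFcont : ContinuousOn F (Icc t₀ t) := by
      have hzc' : ContinuousOn z (Icc t₀ t) := hzc.continuousOn
      exact ((((ha.mul (hzc'.pow 3)).add (hb.mul (hzc'.pow 2))).add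
        (hc.mul hzc')).add hd).neg
    have hflim : Filter.Tendsto (fun x => deriv z x) (𝓝[<] t) (𝓝 (F t)) := by
      have h1 : Filter.Tendsto F (𝓝[<] t) (𝓝 (F t)) := by
        rw [← nhdsWithin_Ico_eq_nhdsLT hτ]
        exact ((hFcont t (right_mem_Icc.mpr hτ.le)).tendsto).mono_left
          (nhdsWithin_mono _ Ico_subset_Icc_self)
      refine h1.congr' ?_
      filter_upwards [Ioo_mem_nhdsLT_of_mem (right_mem_Ioc.mpr hτ)] with x hx
      have : deriv z x = f x := (hzD x hx).deriv
      rw [this, hF_def]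
      simp only [hf_def, abelRHS, hz_eq (Ioo_subset_Ico_self hx)]
    have hE : HasDerivWithinAt z (F t) (Iic t) t :=
      hasDerivWithinAt_Iic_of_tendsto_deriv hdiff hzc.continuousWithinAt
        (Ioo_mem_nhdsLT_of_mem (right_mem_Ioc.mpr hτ)) hflim
    have h3 : abelRHS a b c d z t = F t := rfl
    rw [h3]
    exact hE.mono Icc_subset_Iic_self
end

section
/- Let y₁ and y₂ be solutions of equations (2.1) and (3.10) respectively on [t₀, τ₀) with y₁(t₀) ≤ y₂(t₀), and assume: (IV) (a₁(t) − a(t))y₁(t)³ + (b₁(t) − b(t))y₁(t)² + (c₁(t) − c(t))y₁(t) + d₁(t) − d(t) ≥ 0 for all t ∈ [t₀, τ₀); (V) (a₂(t) − a(t))y₂(t)³ + (b₂(t) − b(t))y₂(t)² + (c₂(t) − c(t))y₂(t) + d₂(t) − d(t) ≤ 0 for all t ∈ [t₀, τ₀). Then every noncontinuable solution y of the Abel equation (1.1) with y(t₀) ∈ [y₁(t₀), y₂(t₀)] is defined on all of [t₀, τ₀) and satisfies y₁(t) ≤ y(t) ≤ y₂(t) for all t ∈ [t₀, τ₀). Furthermore,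 if y₁(t₀) < y(t₀) then y₁(t) < y(t) on [t₀, τ₀), and if y(t₀) < y₂(t₀) then y(t) < y₂(t) on [t₀, τ₀). -/
set_option maxHeartbeats 1000000


open Set MeasureTheory intervalIntegral

section AuxAbel
open Filter


lemma mono_exp_aux {p q K : ℝ} {w w' : ℝ → ℝ}
    (hw : ∀ t ∈ Icc p q, HasDerivWithinAt w (w' t) (Icc p q) t)
    (h : ∀ t ∈ Icc p q, K * w t ≤ w' t) :
    MonotoneOn (fun t => w t * Real.exp (-K * t)) (Icc p q) := by
  have hderiv : ∀ t ∈ Ioo p q,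
      HasDerivAt (fun t => w t * Real.exp (-K * t))
        (w' t * Real.exp (-K * t) + w t * (Real.exp (-K * t) * -K)) t := by
    intro t ht
    have h1 : HasDerivAt w (w' t) t :=
      (hw t (Ioo_subset_Icc_self ht)).hasDerivAt (Icc_mem_nhds ht.1 ht.2)
    have h2 : HasDerivAt (fun t : ℝ => Real.exp (-K * t)) (Real.exp (-K * t) * -K) t := by
      simpa using (((hasDerivAt_id t).const_mul (-K)).exp)
    exact h1.mul h2
  apply monotoneOn_of_deriv_nonneg (convex_Icc p q)
  · exact ContinuousOn.mul (fun t ht => (hw t ht).continuousWithinAt)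
      (Real.continuous_exp.comp (continuous_const.mul continuous_id)).continuousOn
  · intro t ht
    rw [interior_Icc] at ht
    exact (hderiv t ht).differentiableAt.differentiableWithinAt
  · intro t ht
    rw [interior_Icc] at ht
    rw [(hderiv t ht).deriv]
    have h3 := h t (Ioo_subset_Icc_self ht)
    have h4 : w' t * Real.exp (-K * t) + w t * (Real.exp (-K * t) * -K)
        = (w' t - K * w t) * Real.exp (-K * t) := by ring
    rw [h4]
    exact mul_nonneg (by linarith) (Real.exp_pos _).le

lemma nonneg_of_deriv {p q M : ℝ} {w w' : ℝ → ℝ} (hpq : p ≤ q)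
    (hw : ∀ t ∈ Icc p q, HasDerivWithinAt w (w' t) (Icc p q) t)
    (h : ∀ t ∈ Icc p q, -(M * |w t|) ≤ w' t) (h0 : 0 ≤ w p) :
    ∀ s ∈ Icc p q, 0 ≤ w s := by
  intro s hs
  by_contra hneg
  push_neg at hneg
  have hcontw : ContinuousOn w (Icc p q) := fun t ht => (hw t ht).continuousWithinAt
  set A : Set ℝ := {t ∈ Icc p s | 0 ≤ w t} with hA
  have hps : p ≤ s := hs.1
  have hAne : A.Nonempty := ⟨p, ⟨left_mem_Icc.2 hps, h0⟩⟩
  have hAbdd : BddAbove A := ⟨s, fun t ht => ht.1.2⟩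
  have hIccsub : Icc p s ⊆ Icc p q := Icc_subset_Icc le_rfl hs.2
  have hAclosed : IsClosed A := by
    have : A = Icc p s ∩ w ⁻¹' (Ici 0) := by
      ext t; simp [hA, and_comm]
    rw [this]
    exact (hcontw.mono hIccsub).preimage_isClosed_of_isClosed isClosed_Icc isClosed_Ici
  set r := sSup A with hr
  have hrA : r ∈ A := hAclosed.csSup_mem hAne hAbdd
  have hrs : r ≤ s := csSup_le hAne fun t ht => ht.1.2
  have hpr : p ≤ r := le_csSup hAbdd ⟨left_mem_Icc.2 hps, h0⟩
  have hrns : r ≠ s := by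
    intro hrs'
    rw [hrs'] at hrA
    exact absurd hrA.2 (not_le.2 hneg)
  have hrlt : r < s := lt_of_le_of_ne hrs hrns
  have hlt0 : ∀ t ∈ Ioc r s, w t < 0 := by
    intro t ht
    by_contra hge
    push_neg at hge
    have : t ∈ A := ⟨⟨hpr.trans ht.1.le, ht.2⟩, hge⟩
    exact absurd (le_csSup hAbdd this) (not_le.2 ht.1)
  -- w r = 0
  have hwr0 : w r = 0 := by
    have hge : 0 ≤ w r := hrA.2
    have hle : w r ≤ 0 := by
      have hten : Filter.Tendsto w (nhdsWithin r (Ioc r s)) (nhds (w r)) := by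
        have := (hcontw r (hIccsub hrA.1)).mono
          (show Ioc r s ⊆ Icc p q from fun x hx =>
            ⟨hpr.trans hx.1.le, hx.2.trans hs.2⟩)
        exact this.tendsto.mono_left (nhdsWithin_mono r (by exact fun x hx => hx))
      have hne : (nhdsWithin r (Ioc r s)).NeBot := by
        have h1 : Ioc r s ∈ nhdsWithin r (Ioi r) := by
          rw [← Ioi_inter_Iic]
          exact Filter.inter_mem self_mem_nhdsWithin
            (mem_nhdsWithin_of_mem_nhds (Iic_mem_nhds hrlt))
        exact (nhdsGT_neBot r).mono (nhdsWithin_le_of_mem h1)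
      exact le_of_tendsto hten
        (Filter.eventually_of_mem self_mem_nhdsWithin fun t ht => (hlt0 t ht).le)
    linarith
  -- apply mono on [r,s]
  have hsub2 : Icc r s ⊆ Icc p q := Icc_subset_Icc hpr (hs.2)
  have hmono := mono_exp_aux (K := M) (w := w) (w' := w')
    (fun t ht => (hw t (hsub2 ht)).mono hsub2)
    (by
      intro t ht
      rcases eq_or_lt_of_le ht.1 with hrt | hrt
      · have h5 := h r (hsub2 (left_mem_Icc.2 hrs))
        rw [← hrt, hwr0]
        simp only [hwr0, abs_zero, mul_zero, neg_zero] at h5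
        simpa using h5
      · have hwt := hlt0 t ⟨hrt, ht.2⟩
        have := h t (hsub2 ht)
        rw [abs_of_neg hwt] at this
        linarith)
  have := hmono (left_mem_Icc.2 hrs) (right_mem_Icc.2 hrs) hrs
  simp only [hwr0, zero_mul] at this
  nlinarith [Real.exp_pos (-M * s)]

lemma pos_of_deriv {p q M : ℝ} {w w' : ℝ → ℝ} (hpq : p ≤ q)
    (hw : ∀ t ∈ Icc p q, HasDerivWithinAt w (w' t) (Icc p q) t)
    (h : ∀ t ∈ Icc p q, -(M * |w t|) ≤ w' t) (h0 : 0 < w p) :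
    ∀ s ∈ Icc p q, 0 < w s := by
  have hnn := nonneg_of_deriv hpq hw h h0.le
  have hmono := mono_exp_aux (K := -M) (w := w) (w' := w') hw
    (by
      intro t ht
      have h1 := h t ht
      rw [abs_of_nonneg (hnn t ht)] at h1
      linarith)
  intro s hs
  have := hmono (left_mem_Icc.2 hpq) hs hs.1
  simp only at this
  nlinarith [Real.exp_pos (- -M * p), Real.exp_pos (- -M * s),
    mul_pos h0 (Real.exp_pos (- -M * p))]

lemma Icc_subset_eIco {t₀ : ℝ} {σ : EReal} {s : ℝ} (hs : s ∈ eIco t₀ σ) :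
    Icc t₀ s ⊆ eIco t₀ σ := fun x hx =>
  ⟨hx.1, lt_of_le_of_lt (EReal.coe_le_coe_iff.2 hx.2) hs.2⟩

lemma comp_main (t₀ : ℝ) (σ : EReal) (A B C u v u' v' : ℝ → ℝ)
    (hA : ContinuousOn A (eIco t₀ σ)) (hB : ContinuousOn B (eIco t₀ σ))
    (hC : ContinuousOn C (eIco t₀ σ))
    (hu : ∀ t ∈ eIco t₀ σ, HasDerivWithinAt u (u' t) (eIco t₀ σ) t)
    (hv : ∀ t ∈ eIco t₀ σ, HasDerivWithinAt v (v' t) (eIco t₀ σ) t)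
    (hkey : ∀ t ∈ eIco t₀ σ,
      -((A t * (u t ^ 2 + u t * v t + v t ^ 2) + B t * (u t + v t) + C t) * (u t - v t))
        ≤ u' t - v' t) :
    (0 ≤ u t₀ - v t₀ → ∀ s ∈ eIco t₀ σ, 0 ≤ u s - v s) ∧
      (0 < u t₀ - v t₀ → ∀ s ∈ eIco t₀ σ, 0 < u s - v s) := by
  have key : ∀ s ∈ eIco t₀ σ,
      (0 ≤ u t₀ - v t₀ → 0 ≤ u s - v s) ∧ (0 < u t₀ - v t₀ → 0 < u s - v s) := by
    intro s hs
    have hsub : Icc t₀ s ⊆ eIco t₀ σ := Icc_subset_eIco hs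
    have hts : t₀ ≤ s := hs.1
    set g : ℝ → ℝ := fun t =>
      A t * (u t ^ 2 + u t * v t + v t ^ 2) + B t * (u t + v t) + C t with hg
    have hucont : ContinuousOn u (Icc t₀ s) := fun t ht =>
      ((hu t (hsub ht)).mono hsub).continuousWithinAt
    have hvcont : ContinuousOn v (Icc t₀ s) := fun t ht =>
      ((hv t (hsub ht)).mono hsub).continuousWithinAt
    have hgcont : ContinuousOn g (Icc t₀ s) :=
      (((hA.mono hsub).mul (((hucont.pow 2).add (hucont.mul hvcont)).add
        (hvcont.pow 2))).add ((hB.mono hsub).mul (hucont.add hvcont))).add (hC.mono hsub)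
    obtain ⟨M, hM⟩ := isCompact_Icc.exists_bound_of_continuousOn hgcont
    have hineq : ∀ t ∈ Icc t₀ s, -(M * |u t - v t|) ≤ u' t - v' t := by
      intro t ht
      have h1 := hkey t (hsub ht)
      have h2 : g t * (u t - v t) ≤ M * |u t - v t| := by
        calc g t * (u t - v t) ≤ |g t * (u t - v t)| := le_abs_self _
        _ = |g t| * |u t - v t| := abs_mul _ _
        _ ≤ M * |u t - v t| :=
            mul_le_mul_of_nonneg_right (hM t ht) (abs_nonneg _)
      simp only [hg] at h2
      linarith
    have hw : ∀ t ∈ Icc t₀ s, HasDerivWithinAt (fun t => u t - v t) (u' t - v' t) (Icc t₀ s) t :=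
      fun t ht => ((hu t (hsub ht)).mono hsub).sub ((hv t (hsub ht)).mono hsub)
    exact ⟨fun h0 => nonneg_of_deriv hts hw hineq h0 s (right_mem_Icc.2 hts),
      fun h0 => pos_of_deriv hts hw hineq h0 s (right_mem_Icc.2 hts)⟩
  exact ⟨fun h0 s hs => (key s hs).1 h0, fun h0 s hs => (key s hs).2 h0⟩

lemma extension_step (t₀ : ℝ) (τ₀ : EReal)
    (a b c d : ℝ → ℝ)
    (ha : ContinuousOn a (eIco t₀ τ₀)) (hb : ContinuousOn b (eIco t₀ τ₀))
    (hc : ContinuousOn c (eIco t₀ τ₀)) (hd : ContinuousOn d (eIco t₀ τ₀))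
    (t₁ : EReal) (y y₁ y₂ : ℝ → ℝ) (ht₁ : (t₀ : EReal) < t₁) (hlt : t₁ < τ₀)
    (hy : IsAbelSolOn a b c d y (eIco t₀ t₁))
    (hy₁c : ContinuousOn y₁ (eIco t₀ τ₀)) (hy₂c : ContinuousOn y₂ (eIco t₀ τ₀))
    (hcmp : ∀ t ∈ eIco t₀ t₁, y₁ t ≤ y t ∧ y t ≤ y₂ t) :
    ∃ (t₂ : EReal) (z : ℝ → ℝ), t₁ < t₂ ∧ t₂ ≤ τ₀ ∧
      IsAbelSolOn a b c d z (eIco t₀ t₂) ∧ EqOn z y (eIco t₀ t₁) := by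
  ---- real endpoints
  have ht₁top : t₁ ≠ ⊤ := hlt.ne_top
  have ht₁bot : t₁ ≠ ⊥ := ht₁.ne_bot
  set s₁ := t₁.toReal with hs₁def
  have hcoe : (s₁ : EReal) = t₁ := EReal.coe_toReal ht₁top ht₁bot
  have ht₀s₁ : t₀ < s₁ := by
    rw [← hcoe] at ht₁; exact EReal.coe_lt_coe_iff.1 ht₁
  have hs₁τ : (s₁ : EReal) < τ₀ := by rw [hcoe]; exact hlt
  obtain ⟨σ, hσ1, hσ2⟩ := exists_between hs₁τ
  have hσtop : σ ≠ ⊤ := hσ2.ne_top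
  have hσbot : σ ≠ ⊥ := hσ1.ne_bot
  set s₂ := σ.toReal with hs₂def
  have hcoe2 : (s₂ : EReal) = σ := EReal.coe_toReal hσtop hσbot
  have hs₁s₂ : s₁ < s₂ := by
    rw [← hcoe2] at hσ1; exact EReal.coe_lt_coe_iff.1 hσ1
  have hs₂τ : (s₂ : EReal) < τ₀ := by rw [hcoe2]; exact hσ2
  have hts₂ : t₀ ≤ s₂ := (ht₀s₁.trans hs₁s₂).le
  have hIccτ : Icc t₀ s₂ ⊆ eIco t₀ τ₀ := Icc_subset_eIco ⟨hts₂, hs₂τ⟩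
  have heIcot₁ : eIco t₀ t₁ = Ico t₀ s₁ := by
    ext x
    simp only [eIco, mem_setOf_eq, mem_Ico, ← hcoe, EReal.coe_lt_coe_iff]
  rw [heIcot₁] at hy hcmp
  ---- bound y on Ico t₀ s₁
  have hs₁mem : s₁ ∈ eIco t₀ τ₀ := ⟨ht₀s₁.le, hs₁τ⟩
  have hIccs₁ : Icc t₀ s₁ ⊆ eIco t₀ τ₀ := Icc_subset_eIco hs₁mem
  obtain ⟨B₁, hB₁⟩ := isCompact_Icc.exists_bound_of_continuousOn (hy₁c.mono hIccs₁)
  obtain ⟨B₂, hB₂⟩ := isCompact_Icc.exists_bound_of_continuousOn (hy₂c.mono hIccs₁)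
  set B := max B₁ B₂ with hBdef
  have hyb : ∀ t ∈ Ico t₀ s₁, |y t| ≤ B := by
    intro t ht
    have h1 := hB₁ t (Ico_subset_Icc_self ht)
    have h2 := hB₂ t (Ico_subset_Icc_self ht)
    rw [Real.norm_eq_abs] at h1 h2
    have h3 := hcmp t ht
    rw [abs_le] at h1 h2 ⊢
    constructor
    · calc -B ≤ -B₁ := by simp [hBdef]
        _ ≤ y₁ t := h1.1
        _ ≤ y t := h3.1
    · calc y t ≤ y₂ t := h3.2
        _ ≤ B₂ := h2.2
        _ ≤ B := le_max_right _ _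
  have hB0 : 0 ≤ B := le_trans (abs_nonneg _) (hyb t₀ ⟨le_rfl, ht₀s₁⟩)
  ---- coefficient bounds on Icc t₀ s₁
  obtain ⟨Ca, hCa⟩ := isCompact_Icc.exists_bound_of_continuousOn (ha.mono hIccs₁)
  obtain ⟨Cb, hCb⟩ := isCompact_Icc.exists_bound_of_continuousOn (hb.mono hIccs₁)
  obtain ⟨Cc, hCc⟩ := isCompact_Icc.exists_bound_of_continuousOn (hc.mono hIccs₁)
  obtain ⟨Cd, hCd⟩ := isCompact_Icc.exists_bound_of_continuousOn (hd.mono hIccs₁)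
  have hmemIcc : t₀ ∈ Icc t₀ s₁ := left_mem_Icc.2 ht₀s₁.le
  have hCa0 : 0 ≤ Ca := le_trans (norm_nonneg _) (hCa t₀ hmemIcc)
  have hCb0 : 0 ≤ Cb := le_trans (norm_nonneg _) (hCb t₀ hmemIcc)
  have hCc0 : 0 ≤ Cc := le_trans (norm_nonneg _) (hCc t₀ hmemIcc)
  have hCd0 : 0 ≤ Cd := le_trans (norm_nonneg _) (hCd t₀ hmemIcc)
  set C₀ : ℝ := Ca * B ^ 3 + Cb * B ^ 2 + Cc * B + Cd with hC₀def
  have hC₀0 : 0 ≤ C₀ := by positivity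
  ---- Lipschitz bound for y
  have hbound : ∀ t ∈ Ico t₀ s₁, ‖abelRHS a b c d y t‖₊ ≤ C₀.toNNReal := by
    intro t ht
    have h1 : |abelRHS a b c d y t| ≤ C₀ := by
      have hat := hCa t (Ico_subset_Icc_self ht)
      have hbt := hCb t (Ico_subset_Icc_self ht)
      have hct := hCc t (Ico_subset_Icc_self ht)
      have hdt := hCd t (Ico_subset_Icc_self ht)
      rw [Real.norm_eq_abs] at hat hbt hct hdt
      have hyt := hyb t ht
      have h0 : |y t| ≥ 0 := abs_nonneg _
      calc |abelRHS a b c d y t|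
          = |a t * y t ^ 3 + b t * y t ^ 2 + c t * y t + d t| := by
            rw [abelRHS, abs_neg]
        _ ≤ |a t| * |y t| ^ 3 + |b t| * |y t| ^ 2 + |c t| * |y t| + |d t| := by
            calc |a t * y t ^ 3 + b t * y t ^ 2 + c t * y t + d t|
                ≤ |a t * y t ^ 3 + b t * y t ^ 2 + c t * y t| + |d t| := abs_add_le _ _
              _ ≤ (|a t * y t ^ 3 + b t * y t ^ 2| + |c t * y t|) + |d t| := by
                  gcongr; exact abs_add_le _ _
              _ ≤ ((|a t * y t ^ 3| + |b t * y t ^ 2|) + |c t * y t|) + |d t| := by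
                  gcongr; exact abs_add_le _ _
              _ = |a t| * |y t| ^ 3 + |b t| * |y t| ^ 2 + |c t| * |y t| + |d t| := by
                  rw [abs_mul, abs_mul, abs_mul, abs_pow, abs_pow]
        _ ≤ Ca * B ^ 3 + Cb * B ^ 2 + Cc * B + Cd := by gcongr
        _ = C₀ := hC₀def.symm
    rw [← NNReal.coe_le_coe, coe_nnnorm, Real.norm_eq_abs, Real.coe_toNNReal _ hC₀0]
    exact h1
  have hlip : LipschitzOnWith C₀.toNNReal y (Ico t₀ s₁) :=
    (convex_Ico t₀ s₁).lipschitzOnWith_of_nnnorm_hasDerivWithin_le hy hbound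
  obtain ⟨g, hglip, hgy⟩ := hlip.extend_real
  set L := g s₁ with hLdef
  ---- extended coefficients
  set clA : ℝ → ℝ := fun t => max t₀ (min s₂ t) with hclAdef
  have hclAcont : Continuous clA := continuous_const.max (continuous_const.min continuous_id)
  have hclAmem : ∀ t, clA t ∈ Icc t₀ s₂ := fun t =>
    ⟨le_max_left _ _, max_le hts₂ (min_le_left _ _)⟩
  have hclAeq : ∀ t ∈ Icc t₀ s₂, clA t = t := fun t ht => by
    simp only [hclAdef]
    rw [min_eq_right ht.2, max_eq_right ht.1]
  set aa : ℝ → ℝ := a ∘ clA with haadef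
  set bb : ℝ → ℝ := b ∘ clA with hbbdef
  set cc : ℝ → ℝ := c ∘ clA with hccdef
  set dd : ℝ → ℝ := d ∘ clA with hdddef
  have haacont : Continuous aa := (ha.mono hIccτ).comp_continuous hclAcont hclAmem
  have hbbcont : Continuous bb := (hb.mono hIccτ).comp_continuous hclAcont hclAmem
  have hcccont : Continuous cc := (hc.mono hIccτ).comp_continuous hclAcont hclAmem
  have hddcont : Continuous dd := (hd.mono hIccτ).comp_continuous hclAcont hclAmem
  have haaeq : ∀ t ∈ Icc t₀ s₂, aa t = a t ∧ bb t = b t ∧ cc t = c t ∧ dd t = d t := by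
    intro t ht
    simp only [haadef, hbbdef, hccdef, hdddef, Function.comp_apply, hclAeq t ht]
    simp
  ---- Picard–Lindelöf data
  obtain ⟨Ma, hMa⟩ := isCompact_Icc.exists_bound_of_continuousOn
    (haacont.continuousOn (s := Icc s₁ s₂))
  obtain ⟨Mb, hMb⟩ := isCompact_Icc.exists_bound_of_continuousOn
    (hbbcont.continuousOn (s := Icc s₁ s₂))
  obtain ⟨Mc, hMc⟩ := isCompact_Icc.exists_bound_of_continuousOn
    (hcccont.continuousOn (s := Icc s₁ s₂))
  obtain ⟨Md, hMd⟩ := isCompact_Icc.exists_bound_of_continuousOn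
    (hddcont.continuousOn (s := Icc s₁ s₂))
  have hmem12 : s₁ ∈ Icc s₁ s₂ := left_mem_Icc.2 hs₁s₂.le
  have hMa0 : 0 ≤ Ma := le_trans (norm_nonneg _) (hMa s₁ hmem12)
  have hMb0 : 0 ≤ Mb := le_trans (norm_nonneg _) (hMb s₁ hmem12)
  have hMc0 : 0 ≤ Mc := le_trans (norm_nonneg _) (hMc s₁ hmem12)
  have hMd0 : 0 ≤ Md := le_trans (norm_nonneg _) (hMd s₁ hmem12)
  set P : ℝ := |L| + 1 with hPdef
  have hP0 : 0 < P := by positivity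
  have hxP : ∀ x ∈ Metric.closedBall L 1, |x| ≤ P := by
    intro x hx
    rw [Metric.mem_closedBall, Real.dist_eq] at hx
    calc |x| = |L + (x - L)| := by ring_nf
      _ ≤ |L| + |x - L| := abs_add_le _ _
      _ ≤ |L| + 1 := by linarith
  set K : ℝ := Ma * (3 * P ^ 2) + (Mb * (2 * P) + Mc) with hKdef
  have hK0 : 0 ≤ K := by positivity
  set CC : ℝ := Ma * P ^ 3 + Mb * P ^ 2 + Mc * P + Md with hCCdef
  have hCC0 : 0 ≤ CC := by positivity
  set ε : ℝ := min (1 / (CC + 1)) (s₂ - s₁) with hεdef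
  have hε0 : 0 < ε := lt_min (by positivity) (by linarith)
  set s₃ : ℝ := s₁ + ε with hs₃def
  have hs₁s₃ : s₁ < s₃ := by simp only [hs₃def]; linarith
  have hs₃s₂ : s₃ ≤ s₂ := by
    have h := min_le_right (1 / (CC + 1)) (s₂ - s₁)
    have hεle : ε ≤ s₂ - s₁ := by rw [hεdef]; exact h
    simp only [hs₃def]; linarith
  set v : ℝ → ℝ → ℝ := fun t x => -(aa t * x ^ 3 + bb t * x ^ 2 + cc t * x + dd t)
    with hvdef
  have hpl : IsPicardLindelof v (tmin := s₁) (tmax := s₃) ⟨s₁, left_mem_Icc.2 hs₁s₃.le⟩ L 1 0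
      CC.toNNReal K.toNNReal := by
    refine ⟨?_, ?_, ?_, ?_⟩
    · -- lipschitz
      intro t ht
      have htIcc : t ∈ Icc s₁ s₂ := ⟨ht.1, ht.2.trans hs₃s₂⟩
      have hat := hMa t htIcc; have hbt := hMb t htIcc; have hct := hMc t htIcc
      rw [Real.norm_eq_abs] at hat hbt hct
      apply (convex_closedBall L 1).lipschitzOnWith_of_nnnorm_hasDerivWithin_le
        (f' := fun x => -(aa t * (3 * x ^ 2) + (bb t * (2 * x) + cc t)))
      · intro x _
        have h := (((((hasDerivAt_pow 3 x).const_mul (aa t)).add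
            ((hasDerivAt_pow 2 x).const_mul (bb t))).add
            ((hasDerivAt_id' x).const_mul (cc t))).add (hasDerivAt_const x (dd t))).neg
        have h2 : HasDerivAt (v t) (-(aa t * (3 * x ^ 2) + (bb t * (2 * x) + cc t))) x := by
          have h3 := h.congr_deriv
            (by push_cast; ring : _ = -(aa t * (3 * x ^ 2) + (bb t * (2 * x) + cc t)))
          exact h3
        exact h2.hasDerivWithinAt
      · intro x hx
        have hx' := hxP x hx
        have h1 : |(fun x => -(aa t * (3 * x ^ 2) + (bb t * (2 * x) + cc t))) x| ≤ K := by
          simp only [abs_neg]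
          calc |aa t * (3 * x ^ 2) + (bb t * (2 * x) + cc t)|
              ≤ |aa t * (3 * x ^ 2)| + (|bb t * (2 * x)| + |cc t|) :=
                (abs_add_le _ _).trans (by gcongr; exact abs_add_le _ _)
            _ = |aa t| * (3 * |x| ^ 2) + (|bb t| * (2 * |x|) + |cc t|) := by
                rw [abs_mul, abs_mul, abs_mul, abs_mul, abs_pow]
                norm_num
            _ ≤ Ma * (3 * P ^ 2) + (Mb * (2 * P) + Mc) := by gcongr
            _ = K := hKdef.symm
        rw [← NNReal.coe_le_coe, coe_nnnorm, Real.norm_eq_abs, Real.coe_toNNReal _ hK0]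
        exact h1
    · -- continuity in t
      intro x _
      have : Continuous fun t => v t x :=
        ((((haacont.mul continuous_const).add (hbbcont.mul continuous_const)).add
          (hcccont.mul continuous_const)).add hddcont).neg
      exact this.continuousOn
    · -- norm_le
      intro t ht x hx
      rw [Real.coe_toNNReal _ hCC0]
      have htIcc : t ∈ Icc s₁ s₂ := ⟨ht.1, ht.2.trans hs₃s₂⟩
      have hat := hMa t htIcc; have hbt := hMb t htIcc
      have hct := hMc t htIcc; have hdt := hMd t htIcc
      rw [Real.norm_eq_abs] at hat hbt hct hdt
      have hx' := hxP x hx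
      rw [Real.norm_eq_abs]
      simp only [hvdef, abs_neg]
      calc |aa t * x ^ 3 + bb t * x ^ 2 + cc t * x + dd t|
          ≤ |aa t| * |x| ^ 3 + |bb t| * |x| ^ 2 + |cc t| * |x| + |dd t| := by
            calc |aa t * x ^ 3 + bb t * x ^ 2 + cc t * x + dd t|
                ≤ |aa t * x ^ 3 + bb t * x ^ 2 + cc t * x| + |dd t| := abs_add_le _ _
              _ ≤ (|aa t * x ^ 3 + bb t * x ^ 2| + |cc t * x|) + |dd t| := by
                  gcongr; exact abs_add_le _ _
              _ ≤ ((|aa t * x ^ 3| + |bb t * x ^ 2|) + |cc t * x|) + |dd t| := by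
                  gcongr; exact abs_add_le _ _
              _ = |aa t| * |x| ^ 3 + |bb t| * |x| ^ 2 + |cc t| * |x| + |dd t| := by
                  rw [abs_mul, abs_mul, abs_mul, abs_pow, abs_pow]
        _ ≤ Ma * P ^ 3 + Mb * P ^ 2 + Mc * P + Md := by gcongr
        _ = CC := hCCdef.symm
    · -- C_mul_le_R
      show CC.toNNReal * max (s₃ - s₁) (s₁ - s₁) ≤ ((1 : NNReal) : ℝ) - ((0 : NNReal) : ℝ)
      rw [Real.coe_toNNReal _ hCC0, NNReal.coe_one, NNReal.coe_zero, sub_zero]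
      have hε1 : ε ≤ 1 / (CC + 1) := min_le_left _ _
      have h1 : max (s₃ - s₁) (s₁ - s₁) = ε := by
        simp only [hs₃def, sub_self, add_sub_cancel_left]
        exact max_eq_left hε0.le
      rw [h1]
      have h2 : CC * ε ≤ CC * (1 / (CC + 1)) := mul_le_mul_of_nonneg_left hε1 hCC0
      have h3 : CC * (1 / (CC + 1)) ≤ 1 := by
        rw [mul_one_div, div_le_one (by positivity)]
        linarith
      exact h2.trans h3
  obtain ⟨u, hu0, hu⟩ := hpl.exists_eq_forall_mem_Icc_hasDerivWithinAt₀
  ---- gluing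
  classical
  set clB : ℝ → ℝ := fun t => max s₁ (min s₃ t) with hclBdef
  have hclBcont : Continuous clB := continuous_const.max (continuous_const.min continuous_id)
  have hclBmem : ∀ t, clB t ∈ Icc s₁ s₃ := fun t =>
    ⟨le_max_left _ _, max_le hs₁s₃.le (min_le_left _ _)⟩
  have hclBeq : ∀ t ∈ Icc s₁ s₃, clB t = t := fun t ht => by
    simp only [hclBdef]; rw [min_eq_right ht.2, max_eq_right ht.1]
  have hucont : ContinuousOn u (Icc s₁ s₃) := fun t ht => (hu t ht).continuousWithinAt
  set uu : ℝ → ℝ := u ∘ clB with huudef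
  have huucont : Continuous uu := hucont.comp_continuous hclBcont hclBmem
  set z : ℝ → ℝ := fun t => if t ≤ s₁ then g t else uu t with hzdef
  have hgL : g s₁ = uu s₁ := by
    simp only [huudef, Function.comp_apply]
    rw [hclBeq s₁ (left_mem_Icc.2 hs₁s₃.le), hu0]
  have hzcont : Continuous z :=
    Continuous.if_le hglip.continuous huucont continuous_id continuous_const
      (fun x hx => by rw [hx]; exact hgL)
  have hzy : EqOn z y (Ico t₀ s₁) := fun t ht => by
    simp only [hzdef]; rw [if_pos ht.2.le]; exact (hgy ht).symm
  have hzu : ∀ x ∈ Icc s₁ s₃, z x = u x := by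
    intro x hx
    simp only [hzdef]
    by_cases h : x ≤ s₁
    · rw [if_pos h]
      have hx1 : x = s₁ := le_antisymm h hx.1
      rw [hx1]
      rw [hgL]
      simp only [huudef, Function.comp_apply]
      rw [hclBeq s₁ (left_mem_Icc.2 hs₁s₃.le)]
    · rw [if_neg h]
      simp only [huudef, Function.comp_apply]
      rw [hclBeq x hx]
  set F : ℝ → ℝ := fun τ => v τ (z τ) with hFdef
  have hFcont : Continuous F := by
    have h : Continuous fun τ => -(aa τ * z τ ^ 3 + bb τ * z τ ^ 2 + cc τ * z τ + dd τ) :=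
      ((((haacont.mul (hzcont.pow 3)).add (hbbcont.mul (hzcont.pow 2))).add
        (hcccont.mul hzcont)).add hddcont).neg
    exact h
  set Pf : ℝ → ℝ := fun t => y t₀ + ∫ x in t₀..t, F x with hPfdef
  have hPf : ∀ t, HasDerivAt Pf (F t) t := fun t =>
    (intervalIntegral.integral_hasDerivAt_right (hFcont.intervalIntegrable _ _)
      (hFcont.stronglyMeasurableAtFilter _ _) hFcont.continuousAt).const_add (y t₀)
  have hFy : ∀ x ∈ Ico t₀ s₁, F x = abelRHS a b c d y x := by
    intro x hx
    have hx2 : x ∈ Icc t₀ s₂ := ⟨hx.1, hx.2.le.trans hs₁s₂.le⟩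
    obtain ⟨e1, e2, e3, e4⟩ := haaeq x hx2
    simp only [hFdef, hvdef, abelRHS, e1, e2, e3, e4, hzy hx]
  have hEq1 : ∀ t ∈ Ico t₀ s₁, y t = Pf t := by
    intro t ht
    have hsub : Icc t₀ t ⊆ Ico t₀ s₁ := fun τ hτ => ⟨hτ.1, lt_of_le_of_lt hτ.2 ht.2⟩
    have hint : ∫ x in t₀..t, F x = y t - y t₀ := by
      apply intervalIntegral.integral_eq_sub_of_hasDeriv_right_of_le ht.1
      · exact fun τ hτ => ((hy τ (hsub hτ)).continuousWithinAt).mono hsub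
      · intro x hx
        have hmem : Ico t₀ s₁ ∈ nhds x := Ico_mem_nhds hx.1 (hx.2.trans ht.2)
        have h := (hy x (hsub (Ioo_subset_Icc_self hx))).hasDerivAt hmem
        rw [hFy x (hsub (Ioo_subset_Icc_self hx))]
        exact h.hasDerivWithinAt
      · exact hFcont.intervalIntegrable _ _
    simp only [hPfdef]; rw [hint]; ring
  have hEqs₁ : z s₁ = Pf s₁ := by
    have h1 : Filter.Tendsto z (nhdsWithin s₁ (Iio s₁)) (nhds (z s₁)) :=
      (hzcont.tendsto s₁).mono_left nhdsWithin_le_nhds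
    have h2 : Filter.Tendsto Pf (nhdsWithin s₁ (Iio s₁)) (nhds (Pf s₁)) :=
      ((hPf s₁).continuousAt.tendsto).mono_left nhdsWithin_le_nhds
    have hmem : Ico t₀ s₁ ∈ nhdsWithin s₁ (Iio s₁) := by
      rw [← Ici_inter_Iio]
      exact Filter.inter_mem (mem_nhdsWithin_of_mem_nhds (Ici_mem_nhds ht₀s₁))
        self_mem_nhdsWithin
    have hev : z =ᶠ[nhdsWithin s₁ (Iio s₁)] Pf :=
      Filter.eventually_of_mem hmem (fun x hx => (hzy hx).trans (hEq1 x hx))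
    exact tendsto_nhds_unique (h1.congr' hev) h2
  have hEq2 : ∀ t ∈ Icc s₁ s₃, z t = Pf t := by
    intro t ht
    have hint : ∫ x in s₁..t, F x = u t - u s₁ := by
      apply intervalIntegral.integral_eq_sub_of_hasDeriv_right_of_le ht.1
      · exact fun τ hτ => ((hu τ ⟨hτ.1, hτ.2.trans ht.2⟩).continuousWithinAt).mono
          (Icc_subset_Icc le_rfl ht.2)
      · intro x hx
        have h := (hu x ⟨hx.1.le, hx.2.le.trans ht.2⟩).hasDerivAt
          (Icc_mem_nhds hx.1 (hx.2.trans_le ht.2))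
        have hFu : F x = v x (u x) := by
          simp only [hFdef]; rw [hzu x ⟨hx.1.le, hx.2.le.trans ht.2⟩]
        rw [hFu]
        exact h.hasDerivWithinAt
      · exact hFcont.intervalIntegrable _ _
    have hsplit : Pf t = Pf s₁ + ∫ x in s₁..t, F x := by
      simp only [hPfdef]
      rw [← intervalIntegral.integral_add_adjacent_intervals
        (hFcont.intervalIntegrable t₀ s₁) (hFcont.intervalIntegrable s₁ t)]
      ring
    have hz1 : z s₁ = u s₁ := hzu s₁ (left_mem_Icc.2 hs₁s₃.le)
    rw [hsplit, ← hEqs₁, hint, hzu t ht, hz1]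
    ring
  ---- final assembly
  refine ⟨(s₃ : EReal), z, ?_, ?_, ?_, ?_⟩
  · rw [← hcoe]; exact_mod_cast hs₁s₃
  · exact le_of_lt (lt_of_le_of_lt (EReal.coe_le_coe_iff.2 hs₃s₂) hs₂τ)
  · have heIco3 : eIco t₀ ((s₃ : ℝ) : EReal) = Ico t₀ s₃ := by
      ext x; simp only [eIco, mem_setOf_eq, mem_Ico, EReal.coe_lt_coe_iff]
    intro t ht
    rw [heIco3] at ht ⊢
    have hEqAll : EqOn z Pf (Icc t₀ s₃) := by
      intro x hx
      rcases lt_or_ge x s₁ with h | h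
      · exact (hzy ⟨hx.1, h⟩).trans (hEq1 x ⟨hx.1, h⟩)
      · exact hEq2 x ⟨h, hx.2⟩
    have hval : abelRHS a b c d z t = F t := by
      have ht2 : t ∈ Icc t₀ s₂ := ⟨ht.1, ht.2.le.trans hs₃s₂⟩
      obtain ⟨e1, e2, e3, e4⟩ := haaeq t ht2
      simp only [abelRHS, hFdef, hvdef, e1, e2, e3, e4]
    rw [hval]
    exact ((hPf t).hasDerivWithinAt).congr
      (fun x hx => hEqAll (Ico_subset_Icc_self hx)) (hEqAll (Ico_subset_Icc_self ht))
  · rw [heIcot₁]; exact hzy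

end AuxAbel

/-- Theorem 3.5: two-sided comparison of solutions of (1.1) with solutions `y₁` of (2.1)
and `y₂` of (3.10) under the pointwise sign conditions (IV) and (V). -/
theorem stmt_8 (t₀ : ℝ) (τ₀ : EReal) (hτ : (t₀ : EReal) < τ₀)
    (a b c d a₁ b₁ c₁ d₁ a₂ b₂ c₂ d₂ y₁ y₂ : ℝ → ℝ)
    (ha : ContinuousOn a (eIco t₀ τ₀)) (hb : ContinuousOn b (eIco t₀ τ₀))
    (hc : ContinuousOn c (eIco t₀ τ₀)) (hd : ContinuousOn d (eIco t₀ τ₀))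
    (ha₁ : ContinuousOn a₁ (eIco t₀ τ₀)) (hb₁ : ContinuousOn b₁ (eIco t₀ τ₀))
    (hc₁ : ContinuousOn c₁ (eIco t₀ τ₀)) (hd₁ : ContinuousOn d₁ (eIco t₀ τ₀))
    (ha₂ : ContinuousOn a₂ (eIco t₀ τ₀)) (hb₂ : ContinuousOn b₂ (eIco t₀ τ₀))
    (hc₂ : ContinuousOn c₂ (eIco t₀ τ₀)) (hd₂ : ContinuousOn d₂ (eIco t₀ τ₀))
    (hy₁ : IsAbelSolOn a₁ b₁ c₁ d₁ y₁ (eIco t₀ τ₀))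
    (hy₂ : IsAbelSolOn a₂ b₂ c₂ d₂ y₂ (eIco t₀ τ₀))
    (h12 : y₁ t₀ ≤ y₂ t₀)
    (hIV : ∀ t ∈ eIco t₀ τ₀, 0 ≤ (a₁ t - a t) * y₁ t ^ 3 + (b₁ t - b t) * y₁ t ^ 2 +
      (c₁ t - c t) * y₁ t + (d₁ t - d t))
    (hV : ∀ t ∈ eIco t₀ τ₀, (a₂ t - a t) * y₂ t ^ 3 + (b₂ t - b t) * y₂ t ^ 2 +
      (c₂ t - c t) * y₂ t + (d₂ t - d t) ≤ 0)
    (t₁ : EReal) (y : ℝ → ℝ) (ht₁ : (t₀ : EReal) < t₁) (ht₁' : t₁ ≤ τ₀)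
    (hy : IsAbelSolOn a b c d y (eIco t₀ t₁))
    (hnc : Noncontinuable a b c d t₀ τ₀ t₁ y)
    (hy0 : y t₀ ∈ Icc (y₁ t₀) (y₂ t₀)) :
    t₁ = τ₀ ∧ (∀ t ∈ eIco t₀ τ₀, y₁ t ≤ y t ∧ y t ≤ y₂ t) ∧
      (y₁ t₀ < y t₀ → ∀ t ∈ eIco t₀ τ₀, y₁ t < y t) ∧
      (y t₀ < y₂ t₀ → ∀ t ∈ eIco t₀ τ₀, y t < y₂ t) := by
  have hsubτ : eIco t₀ t₁ ⊆ eIco t₀ τ₀ := fun x hx => ⟨hx.1, lt_of_lt_of_le hx.2 ht₁'⟩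
  -- lower comparison: u = y, v = y₁
  have lower := comp_main t₀ t₁ a b c y y₁ (abelRHS a b c d y) (abelRHS a₁ b₁ c₁ d₁ y₁)
    (ha.mono hsubτ) (hb.mono hsubτ) (hc.mono hsubτ) hy
    (fun t ht => (hy₁ t (hsubτ ht)).mono hsubτ)
    (by
      intro t ht
      have h1 : abelRHS a b c d y t - abelRHS a₁ b₁ c₁ d₁ y₁ t +
          (a t * (y t ^ 2 + y t * y₁ t + y₁ t ^ 2) + b t * (y t + y₁ t) + c t) *
            (y t - y₁ t) =
          (a₁ t - a t) * y₁ t ^ 3 + (b₁ t - b t) * y₁ t ^ 2 +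
            (c₁ t - c t) * y₁ t + (d₁ t - d t) := by
        simp only [abelRHS]; ring
      have h2 := hIV t (hsubτ ht)
      linarith
      )
  -- upper comparison: u = y₂, v = y
  have upper := comp_main t₀ t₁ a b c y₂ y (abelRHS a₂ b₂ c₂ d₂ y₂) (abelRHS a b c d y)
    (ha.mono hsubτ) (hb.mono hsubτ) (hc.mono hsubτ)
    (fun t ht => (hy₂ t (hsubτ ht)).mono hsubτ) hy
    (by
      intro t ht
      have h1 : abelRHS a₂ b₂ c₂ d₂ y₂ t - abelRHS a b c d y t +
          (a t * (y₂ t ^ 2 + y₂ t * y t + y t ^ 2) + b t * (y₂ t + y t) + c t) *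
            (y₂ t - y t) =
          -((a₂ t - a t) * y₂ t ^ 3 + (b₂ t - b t) * y₂ t ^ 2 +
            (c₂ t - c t) * y₂ t + (d₂ t - d t)) := by
        simp only [abelRHS]; ring
      have h2 := hV t (hsubτ ht)
      linarith
      )
  have hcmp : ∀ t ∈ eIco t₀ t₁, y₁ t ≤ y t ∧ y t ≤ y₂ t := fun t ht =>
    ⟨by linarith [lower.1 (by linarith [hy0.1]) t ht],
     by linarith [upper.1 (by linarith [hy0.2]) t ht]⟩
  have heq : t₁ = τ₀ := by
    by_contra hne
    exact hnc (extension_step t₀ τ₀ a b c d ha hb hc hd t₁ y y₁ y₂ ht₁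
      (lt_of_le_of_ne ht₁' hne) hy
      (fun t ht => ((hy₁ t ht).continuousWithinAt))
      (fun t ht => ((hy₂ t ht).continuousWithinAt)) hcmp)
  subst heq
  exact ⟨rfl, hcmp,
    fun h0 t ht => by linarith [lower.2 (by linarith) t ht],
    fun h0 t ht => by linarith [upper.2 (by linarith) t ht]⟩
end
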